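/- arXiv:2604.19220 — 6 statements merged into one kernel-verified Lean document; each statement's English description precedes it below -/
import Mathlib

section
/- For every n ≥ 1 and every 1 ≤ k ≤ n, the break point a_{n,k} admits the probabilistic representation a_{n,k} = φ_n(P(x_n ≤ k − 1)), where φ_n(x) = a_{n,0} + l_n x. -/
open MeasureTheory Filter Set
open scoped ENNReal

/-- The auxiliary Markov chain: `x_0 = 0` and
`x_n = n ε_n ν_n + (1 - ε_n)(x_{n-1} + Y_{n, x_{n-1}+1})`. -/
def xProc {Ω : Type*} (Y : ℕ → ℕ → Ω → ℕ) (ν ε : ℕ → Ω → ℕ) : ℕ → Ω → ℕ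
  | 0 => fun _ => 0
  | n + 1 => fun ω =>
      (n + 1) * ε (n + 1) ω * ν (n + 1) ω +
        (1 - ε (n + 1) ω) * (xProc Y ν ε n ω + Y (n + 1) (xProc Y ν ε n ω + 1) ω)

abbrev BRIdx := (ℕ × ℕ) ⊕ ℕ ⊕ ℕ

def brG : ℕ → (BRIdx → ℕ) → ℕ
  | 0 => fun _ => 0
  | n + 1 => fun f =>
      (n + 1) * min (f (.inr (.inr (n + 1)))) 1 * min (f (.inr (.inl (n + 1)))) 1 +
        (1 - min (f (.inr (.inr (n + 1)))) 1) *
          (brG n f + min (f (.inl (n + 1, brG n f + 1))) 1)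

lemma brG_le (n : ℕ) (f : BRIdx → ℕ) : brG n f ≤ n := by
  induction n with
  | zero => simp [brG]
  | succ n ih =>
    have h1 : min (f (.inr (.inr (n + 1)))) 1 ≤ 1 := min_le_right _ _
    have h2 : min (f (.inr (.inl (n + 1)))) 1 ≤ 1 := min_le_right _ _
    have h3 : min (f (.inl (n + 1, brG n f + 1))) 1 ≤ 1 := min_le_right _ _
    simp only [brG]
    rcases Nat.le_one_iff_eq_zero_or_eq_one.mp h1 with h | h <;> rw [h]
    · simpa using by omega
    · rcases Nat.le_one_iff_eq_zero_or_eq_one.mp h2 with h' | h' <;> rw [h'] <;> simp <;> omega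

lemma brG_congr (n : ℕ) (f g : BRIdx → ℕ)
    (hY : ∀ m k, m ≤ n → k ≤ n → f (.inl (m, k)) = g (.inl (m, k)))
    (hν : ∀ m, m ≤ n → f (.inr (.inl m)) = g (.inr (.inl m)))
    (hε : ∀ m, m ≤ n → f (.inr (.inr m)) = g (.inr (.inr m))) :
    brG n f = brG n g := by
  induction n with
  | zero => simp [brG]
  | succ n ih =>
    have hrec : brG n f = brG n g :=
      ih (fun m k hm hk => hY m k (hm.trans (by omega)) (hk.trans (by omega)))
        (fun m hm => hν m (hm.trans (by omega))) (fun m hm => hε m (hm.trans (by omega)))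
    simp only [brG, hrec, hY (n + 1) (brG n g + 1) le_rfl (by have := brG_le n g; omega),
      hν (n + 1) le_rfl, hε (n + 1) le_rfl]

lemma measurable_brG (n : ℕ) : Measurable (brG n) := by
  induction n with
  | zero => simpa [brG] using measurable_const
  | succ n ih =>
    have hco : ∀ i : BRIdx, Measurable fun f : BRIdx → ℕ => min (f i) 1 := fun i =>
      (measurable_pi_apply i).min measurable_const
    have key : (fun f : BRIdx → ℕ => min (f (.inl (n + 1, brG n f + 1))) 1) =
        fun f => ∑ j ∈ Finset.range (n + 1),
          if brG n f = j then min (f (.inl (n + 1, j + 1))) 1 else 0 := by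
      funext f
      rw [Finset.sum_ite_eq (Finset.range (n + 1)) (brG n f)
        (fun j => min (f (.inl (n + 1, j + 1))) 1), if_pos (Finset.mem_range.mpr (by
          have := brG_le n f; omega))]
    have hterm : Measurable (fun f : BRIdx → ℕ =>
        min (f (.inl (n + 1, brG n f + 1))) 1) := by
      rw [key]
      refine Finset.measurable_sum _ fun j _ => Measurable.ite ?_ (hco _) measurable_const
      exact ih (measurableSet_singleton j)
    show Measurable fun f => _
    simp only [brG]
    exact ((measurable_const.mul (hco _)).mul (hco _)).add
      ((measurable_const.sub (hco _)).mul (ih.add hterm))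

lemma xProc_eq_brG {Ω : Type*} (Y : ℕ → ℕ → Ω → ℕ) (ν ε : ℕ → Ω → ℕ)
    (hY_le : ∀ n k ω, Y n k ω ≤ 1) (hν_le : ∀ n ω, ν n ω ≤ 1) (hε_le : ∀ n ω, ε n ω ≤ 1)
    (n : ℕ) (ω : Ω) :
    xProc Y ν ε n ω =
      brG n (fun i => Sum.elim (fun nk : ℕ × ℕ => Y nk.1 nk.2) (Sum.elim ν ε) i ω) := by
  induction n with
  | zero => simp [xProc, brG]
  | succ n ih =>
    simp only [xProc, brG, ← ih, Sum.elim_inr, Sum.elim_inl,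
      Nat.min_eq_left (hY_le _ _ ω), Nat.min_eq_left (hν_le _ ω), Nat.min_eq_left (hε_le _ ω)]

lemma prob_eq_zero_of_le_one {Ω : Type*} [MeasurableSpace Ω] (ℙ : Measure Ω)
    [IsProbabilityMeasure ℙ] (g : Ω → ℕ) (hg : Measurable g) (hle : ∀ ω, g ω ≤ 1)
    {c : ℝ} (hc0 : 0 ≤ c) (h1 : ℙ {ω | g ω = 1} = ENNReal.ofReal c) :
    ℙ {ω | g ω = 0} = ENNReal.ofReal (1 - c) := by
  have hset : {ω | g ω = 0} = {ω | g ω = 1}ᶜ := by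
    ext ω; have := hle ω
    simp only [mem_setOf_eq, mem_compl_iff]; omega
  have hms : MeasurableSet {ω | g ω = 1} := hg (measurableSet_singleton 1)
  rw [hset, measure_compl hms (measure_ne_top _ _), h1, measure_univ,
    ENNReal.ofReal_sub _ hc0, ENNReal.ofReal_one]

lemma indep_pair_xProc {Ω : Type*} [MeasurableSpace Ω] (ℙ : Measure Ω)
    (Y : ℕ → ℕ → Ω → ℕ) (ν ε : ℕ → Ω → ℕ)
    (hY_le : ∀ n k ω, Y n k ω ≤ 1) (hν_le : ∀ n ω, ν n ω ≤ 1) (hε_le : ∀ n ω, ε n ω ≤ 1)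
    (hY_meas : ∀ n k, Measurable (Y n k)) (hν_meas : ∀ n, Measurable (ν n))
    (hε_meas : ∀ n, Measurable (ε n))
    (hindep : ProbabilityTheory.iIndepFun
      (Sum.elim (fun nk : ℕ × ℕ => Y nk.1 nk.2) (Sum.elim ν ε)) ℙ)
    (n j : ℕ) :
    ProbabilityTheory.IndepFun
      (fun ω => (ε (n + 1) ω, Y (n + 1) (j + 1) ω)) (xProc Y ν ε n) ℙ := by
  classical
  set f : BRIdx → Ω → ℕ := Sum.elim (fun nk : ℕ × ℕ => Y nk.1 nk.2) (Sum.elim ν ε) with hfdef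
  have hfmeas : ∀ i : BRIdx, Measurable (f i) := by
    rintro (⟨m, k⟩ | m | m)
    · exact hY_meas m k
    · exact hν_meas m
    · exact hε_meas m
  set S : Finset BRIdx := {Sum.inr (Sum.inr (n + 1)), Sum.inl (n + 1, j + 1)} with hS
  set T : Finset BRIdx :=
    ((Finset.range (n + 1) ×ˢ Finset.range (n + 1)).image Sum.inl ∪
      (Finset.range (n + 1)).image fun m => Sum.inr (Sum.inl m)) ∪
      (Finset.range (n + 1)).image (fun m => Sum.inr (Sum.inr m)) with hT
  have hST : Disjoint S T := by
    rw [Finset.disjoint_left]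
    intro i hi hiT
    simp only [hS, Finset.mem_insert, Finset.mem_singleton] at hi
    simp only [hT, Finset.mem_union, Finset.mem_image, Finset.mem_product,
      Finset.mem_range] at hiT
    rcases hi with rfl | rfl <;> simp_all <;> omega
  have hmemE : (Sum.inr (Sum.inr (n + 1)) : BRIdx) ∈ S := by simp [hS]
  have hmemY : (Sum.inl (n + 1, j + 1) : BRIdx) ∈ S := by simp [hS]
  have hφ : Measurable fun g : S → ℕ =>
      (g ⟨Sum.inr (Sum.inr (n + 1)), hmemE⟩, g ⟨Sum.inl (n + 1, j + 1), hmemY⟩) :=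
    (measurable_pi_apply _).prodMk (measurable_pi_apply _)
  have hψ : Measurable fun g : T → ℕ =>
      brG n (fun i => if h : i ∈ T then g ⟨i, h⟩ else 0) := by
    refine (measurable_brG n).comp (measurable_pi_lambda _ fun i => ?_)
    by_cases h : i ∈ T
    · simp only [dif_pos h]; exact measurable_pi_apply _
    · simp only [dif_neg h]; exact measurable_const
  have hind := (hindep.indepFun_finset S T hST hfmeas).comp hφ hψ
  have h1 : (fun g : S → ℕ =>
      (g ⟨Sum.inr (Sum.inr (n + 1)), hmemE⟩, g ⟨Sum.inl (n + 1, j + 1), hmemY⟩)) ∘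
      (fun ω (i : S) => f i ω) = fun ω => (ε (n + 1) ω, Y (n + 1) (j + 1) ω) := rfl
  have h2 : (fun g : T → ℕ => brG n (fun i => if h : i ∈ T then g ⟨i, h⟩ else 0)) ∘
      (fun ω (i : T) => f i ω) = xProc Y ν ε n := by
    funext ω
    rw [Function.comp_apply, xProc_eq_brG Y ν ε hY_le hν_le hε_le n ω]
    refine brG_congr n _ _ ?_ ?_ ?_
    · intro m k hm hk
      rw [dif_pos (by simp [hT, Finset.mem_product]; omega)]
    · intro m hm
      rw [dif_pos (by simp [hT]; omega)]
    · intro m hm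
      rw [dif_pos (by simp [hT]; omega)]
  rw [h1, h2] at hind
  exact hind

/-- **Probabilistic representation of the break points:** for all `n ≥ 1` and `1 ≤ k ≤ n`,
`a_{n,k} = φ_n(P(x_n ≤ k-1))` where `φ_n(x) = a_{n,0} + l_n x`. -/
theorem breakpoint_representation
    {Ω : Type*} [MeasurableSpace Ω] (ℙ : Measure Ω) [IsProbabilityMeasure ℙ]
    (p : ℕ → ℕ → ℝ) (hp : ∀ n k, p n k ∈ Icc (0:ℝ) 1)
    (a : ℕ → ℕ → ℝ)
    (ha_anti : Antitone fun n => a n 0)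
    (ha_mono : Monotone fun n => a n (n + 1))
    (ha_pos : a 0 0 < a 0 1)
    (harec : ∀ n : ℕ, 1 ≤ n → ∀ k : ℕ, 1 ≤ k → k ≤ n →
      a n k = p n k * a (n - 1) (k - 1) + (1 - p n k) * a (n - 1) k)
    (l : ℕ → ℝ) (hl : ∀ n, l n = a n (n + 1) - a n 0)
    (qseq : ℕ → ℝ) (hq_mem : ∀ n, qseq n ∈ Icc (0:ℝ) 1)
    (hq_def : ∀ n : ℕ, 1 ≤ n → l (n - 1) < l n →
      qseq n = (a n (n + 1) - a (n - 1) n) / (l n - l (n - 1)))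
    -- the Bernoulli random variables
    (Y : ℕ → ℕ → Ω → ℕ) (ν ε : ℕ → Ω → ℕ)
    (hY_le : ∀ n k ω, Y n k ω ≤ 1) (hν_le : ∀ n ω, ν n ω ≤ 1) (hε_le : ∀ n ω, ε n ω ≤ 1)
    (hY_meas : ∀ n k, Measurable (Y n k)) (hν_meas : ∀ n, Measurable (ν n))
    (hε_meas : ∀ n, Measurable (ε n))
    (hY_dist : ∀ n k, ℙ {ω | Y n k ω = 1} = ENNReal.ofReal (p n k))
    (hν_dist : ∀ n, ℙ {ω | ν n ω = 1} = ENNReal.ofReal (qseq n))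
    (hε_dist : ∀ n : ℕ, 1 ≤ n →
      ℙ {ω | ε n ω = 1} = ENNReal.ofReal (1 - l (n - 1) / l n))
    -- joint independence of the whole family
    (hindep : ProbabilityTheory.iIndepFun
      (Sum.elim (fun nk : ℕ × ℕ => Y nk.1 nk.2) (Sum.elim ν ε)) ℙ) :
    ∀ n : ℕ, 1 ≤ n → ∀ k : ℕ, 1 ≤ k → k ≤ n →
      a n k = a n 0 + l n * (ℙ {ω | xProc Y ν ε n ω ≤ k - 1}).toReal := by
  classical
  have hx : ∀ n ω, xProc Y ν ε n ω =
      brG n fun i => Sum.elim (fun nk : ℕ × ℕ => Y nk.1 nk.2) (Sum.elim ν ε) i ω :=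
    xProc_eq_brG Y ν ε hY_le hν_le hε_le
  have hfmeas : ∀ i : BRIdx,
      Measurable (Sum.elim (fun nk : ℕ × ℕ => Y nk.1 nk.2) (Sum.elim ν ε) i) := by
    rintro (⟨m, k⟩ | m | m)
    · exact hY_meas m k
    · exact hν_meas m
    · exact hε_meas m
  have hxmeas : ∀ n, Measurable (xProc Y ν ε n) := by
    intro n
    have : xProc Y ν ε n = fun ω =>
        brG n fun i => Sum.elim (fun nk : ℕ × ℕ => Y nk.1 nk.2) (Sum.elim ν ε) i ω :=
      funext (hx n)
    rw [this]
    exact (measurable_brG n).comp (measurable_pi_lambda _ hfmeas)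
  have hxle : ∀ n ω, xProc Y ν ε n ω ≤ n := fun n ω => by rw [hx]; exact brG_le _ _
  -- scalar facts
  have hl0 : 0 < l 0 := by rw [hl]; linarith
  have hlmono : Monotone l := by
    refine monotone_nat_of_le_succ fun n => ?_
    have h1 : a n (n + 1) ≤ a (n + 1) (n + 1 + 1) := ha_mono (Nat.le_succ n)
    have h2 : a (n + 1) 0 ≤ a n 0 := ha_anti (Nat.le_succ n)
    rw [hl, hl]; linarith
  have hlpos : ∀ n, 0 < l n := fun n => hl0.trans_le (hlmono (Nat.zero_le n))
  have hqid : ∀ n : ℕ, qseq (n + 1) * (l (n + 1) - l n) = a (n + 1) (n + 2) - a n (n + 1) := by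
    intro n
    rcases eq_or_lt_of_le (hlmono (Nat.le_succ n)) with heq | hlt
    · rw [← heq, sub_self, mul_zero]
      have h1 : a n (n + 1) ≤ a (n + 1) (n + 1 + 1) := ha_mono (Nat.le_succ n)
      have h2 : a (n + 1) 0 ≤ a n 0 := ha_anti (Nat.le_succ n)
      rw [hl, hl] at heq
      have : (2 : ℕ) = 1 + 1 := rfl
      rw [this]
      linarith
    · have h := hq_def (n + 1) (by omega) (by simpa using hlt)
      simp only [Nat.add_sub_cancel] at h
      rw [h, div_mul_cancel₀ _ (show l (n + 1) - l n ≠ 0 from ne_of_gt (by linarith))]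
  -- probabilities of the Bernoulli variables
  have hdiv0 : ∀ n : ℕ, 0 < l n / l (n + 1) := fun n => div_pos (hlpos n) (hlpos (n + 1))
  have hdiv1 : ∀ n : ℕ, l n / l (n + 1) ≤ 1 := fun n =>
    (div_le_one (hlpos (n + 1))).mpr (hlmono (Nat.le_succ n))
  have hpe1 : ∀ n : ℕ, ℙ {ω | ε (n + 1) ω = 1} = ENNReal.ofReal (1 - l n / l (n + 1)) := by
    intro n
    have h := hε_dist (n + 1) (by omega)
    simpa using h
  have hpe0 : ∀ n : ℕ, ℙ {ω | ε (n + 1) ω = 0} = ENNReal.ofReal (l n / l (n + 1)) := by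
    intro n
    have h := prob_eq_zero_of_le_one ℙ (ε (n + 1)) (hε_meas _) (hε_le _)
      (by linarith [hdiv1 n]) (hpe1 n)
    simpa using h
  have hpν0 : ∀ n, ℙ {ω | ν n ω = 0} = ENNReal.ofReal (1 - qseq n) := fun n =>
    prob_eq_zero_of_le_one ℙ (ν n) (hν_meas n) (hν_le n) (hq_mem n).1 (hν_dist n)
  have hpY0 : ∀ n k, ℙ {ω | Y n k ω = 0} = ENNReal.ofReal (1 - p n k) := fun n k =>
    prob_eq_zero_of_le_one ℙ (Y n k) (hY_meas n k) (hY_le n k) (hp n k).1 (hY_dist n k)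
  -- the key induction
  have key : ∀ n : ℕ, ∀ j : ℕ, j ≤ n →
      a n (j + 1) = a n 0 + l n * (ℙ {ω | xProc Y ν ε n ω ≤ j}).toReal := by
    intro n
    induction n with
    | zero =>
      intro j hj
      interval_cases j
      have huniv : {ω | xProc Y ν ε 0 ω ≤ 0} = univ := by
        ext ω; simp [xProc]
      rw [huniv, measure_univ, ENNReal.toReal_one]
      have := hl 0; linarith
    | succ n ih =>
      intro j hj
      rcases Nat.lt_or_ge j (n + 1) with hjn | hjtop
      · -- main case : j ≤ n
        have hjn' : j ≤ n := by omega
        have hpre : ∀ (g : Ω → ℕ) (c : ℕ), g ⁻¹' {c} = {ω | g ω = c} := fun g c => rfl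
        -- the three pieces
        have hsetEq : {ω | xProc Y ν ε (n + 1) ω ≤ j} =
            (ε (n + 1) ⁻¹' {1} ∩ ν (n + 1) ⁻¹' {0}) ∪
              (ε (n + 1) ⁻¹' {0} ∩ xProc Y ν ε n ⁻¹' (Iio j)) ∪
              ((fun ω => (ε (n + 1) ω, Y (n + 1) (j + 1) ω)) ⁻¹' {((0 : ℕ), (0 : ℕ))} ∩
                xProc Y ν ε n ⁻¹' {j}) := by
          ext ω
          have he := hε_le (n + 1) ω
          have hv := hν_le (n + 1) ω
          have hxω := hxle n ω
          have hy := hY_le (n + 1) (xProc Y ν ε n ω + 1) ω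
          simp only [mem_setOf_eq, mem_union, mem_inter_iff, mem_preimage,
            mem_singleton_iff, mem_Iio, Prod.mk.injEq, xProc]
          constructor
          · intro h
            rcases Nat.le_one_iff_eq_zero_or_eq_one.mp he with h0 | h1
            · rw [h0] at h
              simp only [mul_zero, zero_mul, Nat.sub_zero, one_mul, zero_add] at h
              rcases Nat.lt_or_ge (xProc Y ν ε n ω) j with hlt | hge
              · exact Or.inl (Or.inr ⟨h0, hlt⟩)
              · have hxj : xProc Y ν ε n ω = j := by omega
                rw [hxj] at h
                exact Or.inr ⟨⟨h0, by omega⟩, hxj⟩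
            · rw [h1] at h
              simp only [mul_one, Nat.sub_self, zero_mul, add_zero] at h
              refine Or.inl (Or.inl ⟨h1, ?_⟩)
              rcases Nat.le_one_iff_eq_zero_or_eq_one.mp hv with h0 | h1v
              · exact h0
              · rw [h1v, mul_one] at h; omega
          · rintro ((⟨he1, hv0⟩ | ⟨he0, hlt⟩) | ⟨⟨he0, hY0⟩, hxj⟩)
            · rw [he1, hv0]; simp
            · rw [he0]
              simp only [mul_zero, zero_mul, Nat.sub_zero, one_mul, zero_add]
              omega
            · rw [he0]
              simp only [mul_zero, zero_mul, Nat.sub_zero, one_mul, zero_add]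
              rw [hxj, hY0]
              omega
        -- measurability and disjointness
        have hmA : MeasurableSet (ε (n + 1) ⁻¹' {1} ∩ ν (n + 1) ⁻¹' {0}) :=
          (hε_meas (n + 1) (measurableSet_singleton 1)).inter
            (hν_meas (n + 1) (measurableSet_singleton 0))
        have hmB : MeasurableSet (ε (n + 1) ⁻¹' {0} ∩ xProc Y ν ε n ⁻¹' (Iio j)) :=
          (hε_meas (n + 1) (measurableSet_singleton 0)).inter ((hxmeas n) measurableSet_Iio)
        have hmC : MeasurableSet
            ((fun ω => (ε (n + 1) ω, Y (n + 1) (j + 1) ω)) ⁻¹' {((0 : ℕ), (0 : ℕ))} ∩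
              xProc Y ν ε n ⁻¹' {j}) :=
          (((hε_meas (n + 1)).prodMk (hY_meas (n + 1) (j + 1)))
            (measurableSet_singleton _)).inter ((hxmeas n) (measurableSet_singleton j))
        have hdAB : Disjoint (ε (n + 1) ⁻¹' {1} ∩ ν (n + 1) ⁻¹' {0})
            (ε (n + 1) ⁻¹' {0} ∩ xProc Y ν ε n ⁻¹' (Iio j)) := by
          rw [Set.disjoint_left]
          rintro ω ⟨h1, -⟩ ⟨h0, -⟩
          simp only [mem_preimage, mem_singleton_iff] at h1 h0
          omega
        have hdAC : Disjoint (ε (n + 1) ⁻¹' {1} ∩ ν (n + 1) ⁻¹' {0})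
            ((fun ω => (ε (n + 1) ω, Y (n + 1) (j + 1) ω)) ⁻¹' {((0 : ℕ), (0 : ℕ))} ∩
              xProc Y ν ε n ⁻¹' {j}) := by
          rw [Set.disjoint_left]
          rintro ω ⟨h1, -⟩ ⟨h0, -⟩
          simp only [mem_preimage, mem_singleton_iff, Prod.mk.injEq] at h1 h0
          omega
        have hdBC : Disjoint (ε (n + 1) ⁻¹' {0} ∩ xProc Y ν ε n ⁻¹' (Iio j))
            ((fun ω => (ε (n + 1) ω, Y (n + 1) (j + 1) ω)) ⁻¹' {((0 : ℕ), (0 : ℕ))} ∩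
              xProc Y ν ε n ⁻¹' {j}) := by
          rw [Set.disjoint_left]
          rintro ω ⟨-, h1⟩ ⟨-, h0⟩
          simp only [mem_preimage, mem_singleton_iff, mem_Iio] at h1 h0
          omega
        -- additivity
        have hm3 : ℙ ((ε (n + 1) ⁻¹' {1} ∩ ν (n + 1) ⁻¹' {0}) ∪
            (ε (n + 1) ⁻¹' {0} ∩ xProc Y ν ε n ⁻¹' (Iio j)) ∪
            ((fun ω => (ε (n + 1) ω, Y (n + 1) (j + 1) ω)) ⁻¹' {((0 : ℕ), (0 : ℕ))} ∩
              xProc Y ν ε n ⁻¹' {j})) =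
            ℙ (ε (n + 1) ⁻¹' {1} ∩ ν (n + 1) ⁻¹' {0}) +
            ℙ (ε (n + 1) ⁻¹' {0} ∩ xProc Y ν ε n ⁻¹' (Iio j)) +
            ℙ ((fun ω => (ε (n + 1) ω, Y (n + 1) (j + 1) ω)) ⁻¹' {((0 : ℕ), (0 : ℕ))} ∩
              xProc Y ν ε n ⁻¹' {j}) := by
          rw [measure_union (Set.disjoint_union_left.mpr ⟨hdAC, hdBC⟩) hmC,
            measure_union hdAB hmB]
        -- the products
        have hEν : ProbabilityTheory.IndepFun (ε (n + 1)) (ν (n + 1)) ℙ := by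
          have h := hindep.indepFun
            (i := Sum.inr (Sum.inr (n + 1))) (j := Sum.inr (Sum.inl (n + 1))) (by simp)
          simpa using h
        have hPA : ℙ (ε (n + 1) ⁻¹' {1} ∩ ν (n + 1) ⁻¹' {0}) =
            ENNReal.ofReal (1 - l n / l (n + 1)) * ENNReal.ofReal (1 - qseq (n + 1)) := by
          rw [hEν.measure_inter_preimage_eq_mul _ _ (measurableSet_singleton 1)
            (measurableSet_singleton 0), hpre, hpre, hpe1 n, hpν0 (n + 1)]
        have hpairI := indep_pair_xProc ℙ Y ν ε hY_le hν_le hε_le hY_meas hν_meas hε_meas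
          hindep n j
        have hEx : ProbabilityTheory.IndepFun (ε (n + 1)) (xProc Y ν ε n) ℙ :=
          hpairI.comp measurable_fst measurable_id
        have hPB : ℙ (ε (n + 1) ⁻¹' {0} ∩ xProc Y ν ε n ⁻¹' (Iio j)) =
            ENNReal.ofReal (l n / l (n + 1)) * ℙ (xProc Y ν ε n ⁻¹' (Iio j)) := by
          rw [hEx.measure_inter_preimage_eq_mul _ _ (measurableSet_singleton 0)
            measurableSet_Iio, hpre, hpe0 n]
        have hEY : ProbabilityTheory.IndepFun (ε (n + 1)) (Y (n + 1) (j + 1)) ℙ := by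
          have h := hindep.indepFun
            (i := Sum.inr (Sum.inr (n + 1))) (j := Sum.inl (n + 1, j + 1)) (by simp)
          simpa using h
        have hPC : ℙ ((fun ω => (ε (n + 1) ω, Y (n + 1) (j + 1) ω)) ⁻¹' {((0 : ℕ), (0 : ℕ))} ∩
              xProc Y ν ε n ⁻¹' {j}) =
            ENNReal.ofReal (l n / l (n + 1)) * ENNReal.ofReal (1 - p (n + 1) (j + 1)) *
              ℙ (xProc Y ν ε n ⁻¹' {j}) := by
          rw [hpairI.measure_inter_preimage_eq_mul _ _
            (measurableSet_singleton ((0 : ℕ), (0 : ℕ))) (measurableSet_singleton j)]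
          congr 1
          have hsplitpair : (fun ω => (ε (n + 1) ω, Y (n + 1) (j + 1) ω)) ⁻¹'
              {((0 : ℕ), (0 : ℕ))} = ε (n + 1) ⁻¹' {0} ∩ Y (n + 1) (j + 1) ⁻¹' {0} := by
            ext ω; simp [Prod.ext_iff]
          rw [hsplitpair, hEY.measure_inter_preimage_eq_mul _ _ (measurableSet_singleton 0)
            (measurableSet_singleton 0), hpre, hpre, hpe0 n, hpY0 (n + 1) (j + 1)]
        -- real arithmetic
        have hq01 := hq_mem (n + 1)
        have hp01 := hp (n + 1) (j + 1)
        have htotal : (ℙ {ω | xProc Y ν ε (n + 1) ω ≤ j}).toReal =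
            (1 - l n / l (n + 1)) * (1 - qseq (n + 1)) +
              l n / l (n + 1) * (ℙ (xProc Y ν ε n ⁻¹' (Iio j))).toReal +
              l n / l (n + 1) * (1 - p (n + 1) (j + 1)) *
                (ℙ (xProc Y ν ε n ⁻¹' {j})).toReal := by
          rw [hsetEq, hm3, ENNReal.toReal_add (ENNReal.add_ne_top.mpr
              ⟨measure_ne_top _ _, measure_ne_top _ _⟩) (measure_ne_top _ _),
            ENNReal.toReal_add (measure_ne_top _ _) (measure_ne_top _ _),
            hPA, hPB, hPC, ENNReal.toReal_mul, ENNReal.toReal_mul, ENNReal.toReal_mul,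
            ENNReal.toReal_mul, ENNReal.toReal_ofReal (by linarith [hdiv1 n]),
            ENNReal.toReal_ofReal (by linarith [hq01.2]),
            ENNReal.toReal_ofReal (le_of_lt (hdiv0 n)),
            ENNReal.toReal_ofReal (by linarith [hp01.2])]
        have hRST : (ℙ {ω | xProc Y ν ε n ω ≤ j}).toReal =
            (ℙ (xProc Y ν ε n ⁻¹' (Iio j))).toReal + (ℙ (xProc Y ν ε n ⁻¹' {j})).toReal := by
          have hsp : {ω | xProc Y ν ε n ω ≤ j} =
              xProc Y ν ε n ⁻¹' (Iio j) ∪ xProc Y ν ε n ⁻¹' {j} := by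
            ext ω
            simp only [mem_setOf_eq, mem_union, mem_preimage, mem_Iio, mem_singleton_iff]
            omega
          have hd : Disjoint (xProc Y ν ε n ⁻¹' (Iio j)) (xProc Y ν ε n ⁻¹' {j}) := by
            rw [Set.disjoint_left]
            intro ω h1 h0
            simp only [mem_preimage, mem_Iio, mem_singleton_iff] at h1 h0
            omega
          rw [hsp, measure_union hd ((hxmeas n) (measurableSet_singleton j)),
            ENNReal.toReal_add (measure_ne_top _ _) (measure_ne_top _ _)]
        have haj : a n j = a n 0 + l n * (ℙ (xProc Y ν ε n ⁻¹' (Iio j))).toReal := by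
          rcases Nat.eq_zero_or_pos j with rfl | hjpos
          · have hempty : xProc Y ν ε n ⁻¹' (Iio 0) = (∅ : Set Ω) := by
              ext ω; simp
            rw [hempty]
            simp
          · obtain ⟨j', rfl⟩ : ∃ j', j = j' + 1 := ⟨j - 1, by omega⟩
            have h := ih j' (by omega)
            have hseteq2 : {ω | xProc Y ν ε n ω ≤ j'} = xProc Y ν ε n ⁻¹' (Iio (j' + 1)) := by
              ext ω
              simp only [mem_setOf_eq, mem_preimage, mem_Iio]
              omega
            rw [hseteq2] at h
            exact h
        have haj1 := ih j hjn'
        have hrec := harec (n + 1) (by omega) (j + 1) (by omega) (by omega)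
        simp only [Nat.add_sub_cancel] at hrec
        have e1 : l (n + 1) * (l n / l (n + 1)) = l n := by
          rw [mul_comm, div_mul_cancel₀ _ (ne_of_gt (hlpos (n + 1)))]
        have hqn := hqid n
        have hln := hl n
        have hln1 := hl (n + 1)
        rw [hrec, haj, haj1, htotal, hRST]
        linear_combination hqn + hln - hln1 -
          ((ℙ (xProc Y ν ε n ⁻¹' (Iio j))).toReal +
            (1 - p (n + 1) (j + 1)) * (ℙ (xProc Y ν ε n ⁻¹' {j})).toReal -
            (1 - qseq (n + 1))) * e1
      · -- j = n + 1
        have hj1 : j = n + 1 := by omega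
        subst hj1
        have huniv : {ω | xProc Y ν ε (n + 1) ω ≤ n + 1} = univ := by
          ext ω; simpa using hxle (n + 1) ω
        rw [huniv, measure_univ, ENNReal.toReal_one]
        have := hl (n + 1); linarith
  intro n hn k hk hkn
  have h := key n (k - 1) (by omega)
  have hk1 : k - 1 + 1 = k := by omega
  rw [hk1] at h
  exact h
end

section
/- Assume 0 < c < ∞ and that there exists an increasing function L : [0,∞) → [0,∞) with L(n) = l_n for all n ∈ ℕ and L(tx)/L(t) → x^c as t → ∞ for every x > 0. Then L(τ_n)/L(n) converges in distribution to the uniform distribution on [0,1]; equivalently, for every t ∈ (0,1), P(L(τ_n)/L(n) ≤ t) → t as n → ∞. -/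
open MeasureTheory Filter Set
open scoped ENNReal

/-- `τ_n = max {k ≤ n : ε_k = 1}`, with `τ_n = 0` if no such `k` exists. -/
def tauProc {Ω : Type*} (ε : ℕ → Ω → ℕ) (n : ℕ) (ω : Ω) : ℕ :=
  ((Finset.Icc 1 n).filter fun k => ε k ω = 1).sup id

lemma tauProc_le {Ω : Type*} (ε : ℕ → Ω → ℕ) (n : ℕ) (ω : Ω) : tauProc ε n ω ≤ n := by
  apply Finset.sup_le
  intro k hk
  simp only [Finset.mem_filter, Finset.mem_Icc] at hk
  exact hk.1.2

lemma prod_telescope (l : ℕ → ℝ) (hl_pos : ∀ n, 0 < l n) (hl_mono : Monotone l)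
    {m n : ℕ} (h : m ≤ n) :
    ∏ k ∈ Finset.Icc (m+1) n, ENNReal.ofReal (l (k-1) / l k) = ENNReal.ofReal (l m / l n) := by
  induction n, h using Nat.le_induction with
  | base => simp [div_self (hl_pos m).ne']
  | succ n hmn ih =>
      rw [Finset.prod_Icc_succ_top (by omega), ih, ← ENNReal.ofReal_mul
        (div_nonneg (hl_pos m).le (hl_pos n).le)]
      congr 1
      have h1 : l n ≠ 0 := (hl_pos n).ne'
      have h2 : l (n+1) ≠ 0 := (hl_pos (n+1)).ne'
      simp only [Nat.add_sub_cancel]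
      field_simp

lemma prob_tau_le {Ω : Type*} [MeasurableSpace Ω] (ℙ : Measure Ω) [IsProbabilityMeasure ℙ]
    (l : ℕ → ℝ) (hl_pos : ∀ n, 0 < l n) (hl_mono : Monotone l)
    (ε : ℕ → Ω → ℕ)
    (hε_le : ∀ n ω, ε n ω ≤ 1) (hε_meas : ∀ n, Measurable (ε n))
    (hε_dist : ∀ n : ℕ, 1 ≤ n →
      ℙ {ω | ε n ω = 1} = ENNReal.ofReal (1 - l (n - 1) / l n))
    (hindep : ProbabilityTheory.iIndepFun
      ε ℙ)
    {m n : ℕ} (hmn : m ≤ n) :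
    ℙ {ω | tauProc ε n ω ≤ m} = ENNReal.ofReal (l m / l n) := by
  have hset : {ω | tauProc ε n ω ≤ m} = ⋂ k ∈ Finset.Icc (m+1) n, (ε k ⁻¹' {0}) := by
    ext ω
    simp only [mem_setOf_eq, Set.mem_iInter, Set.mem_preimage, Set.mem_singleton_iff,
      Finset.mem_Icc, tauProc, Finset.sup_le_iff, Finset.mem_filter, id_eq, and_imp]
    constructor
    · intro h k hk1 hk2
      have hle := hε_le k ω
      by_contra h0
      have h1 : ε k ω = 1 := by omega
      have := h k (by omega) hk2 h1
      omega
    · intro h k hk1 hk2 hk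
      by_contra h0
      have := h k (by omega) hk2
      omega
  rw [hset, hindep.meas_biInter (fun k _ => ⟨{0}, trivial, rfl⟩)]
  have hterm : ∀ k ∈ Finset.Icc (m+1) n,
      ℙ (ε k ⁻¹' {0}) = ENNReal.ofReal (l (k-1) / l k) := by
    intro k hk
    simp only [Finset.mem_Icc] at hk
    have hk1 : 1 ≤ k := by omega
    have hcompl : ε k ⁻¹' {0} = {ω | ε k ω = 1}ᶜ := by
      ext ω
      have := hε_le k ω
      simp only [Set.mem_preimage, Set.mem_singleton_iff, Set.mem_compl_iff, mem_setOf_eq]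
      omega
    have hmeas : MeasurableSet {ω | ε k ω = 1} := hε_meas k (measurableSet_singleton 1)
    rw [hcompl, measure_compl hmeas (measure_ne_top ℙ _), measure_univ, hε_dist k hk1]
    have ha0 : 0 ≤ l (k-1) / l k := div_nonneg (hl_pos _).le (hl_pos _).le
    have ha1 : l (k-1) / l k ≤ 1 :=
      (div_le_one (hl_pos k)).2 (hl_mono (by omega))
    rw [← ENNReal.ofReal_one, ← ENNReal.ofReal_sub _ (by linarith)]
    congr 1
    ring
  rw [Finset.prod_congr rfl hterm, prod_telescope l hl_pos hl_mono hmn]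

/-- If `l_n` is regularly varying with index `c ∈ (0,∞)` (via an increasing interpolation
`L`), then `L(τ_n)/L(n)` converges in distribution to the uniform distribution on `[0,1]`:
for every `t ∈ (0,1)`, `P(L(τ_n)/L(n) ≤ t) → t`. -/
theorem L_tau_unif_limit
    {Ω : Type*} [MeasurableSpace Ω] (ℙ : Measure Ω) [IsProbabilityMeasure ℙ]
    (l : ℕ → ℝ) (hl_pos : ∀ n, 0 < l n) (hl_mono : Monotone l)
    (ε : ℕ → Ω → ℕ)
    (hε_le : ∀ n ω, ε n ω ≤ 1) (hε_meas : ∀ n, Measurable (ε n))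
    (hε_dist : ∀ n : ℕ, 1 ≤ n →
      ℙ {ω | ε n ω = 1} = ENNReal.ofReal (1 - l (n - 1) / l n))
    (hindep : ProbabilityTheory.iIndepFun
      ε ℙ)
    (c : ℝ) (hc : 0 < c)
    (L : ℝ → ℝ) (hL_nonneg : ∀ x : ℝ, 0 ≤ x → 0 ≤ L x)
    (hL_mono : StrictMonoOn L (Ici (0:ℝ)))
    (hL_interp : ∀ n : ℕ, L n = l n)
    (hL_reg : ∀ x : ℝ, 0 < x →
      Tendsto (fun t : ℝ => L (t * x) / L t) atTop (nhds (x ^ c))) :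
    ∀ t : ℝ, 0 < t → t < 1 →
      Tendsto (fun n : ℕ =>
          (ℙ {ω | L (tauProc ε n ω : ℝ) / L n ≤ t}).toReal) atTop (nhds t) := by
  classical
  intro t ht0 ht1
  -- l tends to infinity
  have hltop : Tendsto l atTop atTop := by
    rcases tendsto_of_monotone hl_mono with h | ⟨M, hM⟩
    · exact h
    · exfalso
      have hMpos : 0 < M :=
        lt_of_lt_of_le (hl_pos 0) (ge_of_tendsto' hM fun n => hl_mono (Nat.zero_le n))
      have h2n : Tendsto (fun n : ℕ => 2 * n) atTop atTop :=
        Filter.tendsto_atTop_atTop.2 fun b => ⟨b, fun a ha => by omega⟩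
      have h2 : Tendsto (fun n => l (2 * n)) atTop (nhds M) := hM.comp h2n
      have h3 : Tendsto (fun n => l (2 * n) / l n) atTop (nhds (M / M)) := h2.div hM hMpos.ne'
      rw [div_self hMpos.ne'] at h3
      have h4 : Tendsto (fun n : ℕ => L (↑n * 2) / L ↑n) atTop (nhds ((2:ℝ) ^ c)) :=
        (hL_reg 2 two_pos).comp tendsto_natCast_atTop_atTop
      have h5 : (fun n : ℕ => L (↑n * 2) / L ↑n) = fun n => l (2 * n) / l n := by
        funext n
        have : ((n : ℝ) * 2) = ((2 * n : ℕ) : ℝ) := by push_cast; ring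
        rw [this, hL_interp (2 * n), hL_interp n]
      rw [h5] at h4
      have : (1 : ℝ) = (2:ℝ) ^ c := tendsto_nhds_unique h3 h4
      have h6 : (1:ℝ) < (2:ℝ) ^ c :=
        (Real.one_lt_rpow_iff_of_pos two_pos).2 (Or.inl ⟨one_lt_two, hc⟩)
      linarith
  -- eventually l 0 ≤ t * l n
  have hev0 : ∀ᶠ n in atTop, l 0 ≤ t * l n :=
    (hltop.const_mul_atTop ht0).eventually_ge_atTop (l 0)
  set mfun : ℕ → ℕ := fun n => Nat.findGreatest (fun m => l m ≤ t * l n) n with hmfun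
  -- key identity for the probability
  have key : ∀ᶠ n in atTop, (ℙ {ω | L (tauProc ε n ω : ℝ) / L ↑n ≤ t}).toReal
      = l (mfun n) / l n := by
    filter_upwards [hev0] with n h0
    have hln : (0:ℝ) < L ↑n := by rw [hL_interp n]; exact hl_pos n
    have hmle : mfun n ≤ n := Nat.findGreatest_le n
    have hspec : l (mfun n) ≤ t * l n :=
      Nat.findGreatest_spec (P := fun m => l m ≤ t * l n) (Nat.zero_le n) h0
    have hev : {ω | L (tauProc ε n ω : ℝ) / L ↑n ≤ t} = {ω | tauProc ε n ω ≤ mfun n} := by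
      ext ω
      simp only [mem_setOf_eq]
      rw [div_le_iff₀ hln, hL_interp n]
      constructor
      · intro h
        apply Nat.le_findGreatest (tauProc_le ε n ω)
        rw [← hL_interp (tauProc ε n ω)]
        exact h
      · intro h
        rw [hL_interp (tauProc ε n ω)]
        exact le_trans (hl_mono h) hspec
    rw [hev, prob_tau_le ℙ l hl_pos hl_mono ε hε_le hε_meas hε_dist hindep hmle,
      ENNReal.toReal_ofReal (div_nonneg (hl_pos _).le (hl_pos _).le)]
  -- reduce to convergence of l (mfun n) / l n
  have main : Tendsto (fun n => l (mfun n) / l n) atTop (nhds t) := by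
    rw [tendsto_order]
    constructor
    · -- lower bound
      intro a ha
      rcases lt_or_ge a 0 with ha0 | ha0
      · filter_upwards with n
        exact ha0.trans_le (div_nonneg (hl_pos _).le (hl_pos _).le)
      · set y := (a + t) / 2 with hy
        have hay : a < y := by rw [hy]; linarith
        have hyt : y < t := by rw [hy]; linarith
        have hy0 : 0 < y := by linarith
        have hy1 : y < 1 := by linarith
        set z := (a + y) / 2 with hz
        have haz : a < z := by rw [hz]; linarith
        have hzy : z < y := by rw [hz]; linarith
        have hz0 : 0 < z := by linarith
        set x1 := y ^ (1/c) with hx1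
        set x0 := z ^ (1/c) with hx0
        have hcinv : 0 < 1/c := by positivity
        have hx1pos : 0 < x1 := Real.rpow_pos_of_pos hy0 _
        have hx0pos : 0 < x0 := Real.rpow_pos_of_pos hz0 _
        have hx01 : x0 < x1 := Real.rpow_lt_rpow hz0.le hzy hcinv
        have hx1lt1 : x1 < 1 := Real.rpow_lt_one hy0.le hy1 hcinv
        have hx1c : x1 ^ c = y := by
          rw [hx1, ← Real.rpow_mul hy0.le, one_div_mul_cancel hc.ne', Real.rpow_one]
        have hx0c : x0 ^ c = z := by
          rw [hx0, ← Real.rpow_mul hz0.le, one_div_mul_cancel hc.ne', Real.rpow_one]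
        have h1 : Tendsto (fun n : ℕ => L (↑n * x1) / L ↑n) atTop (nhds y) := by
          have := (hL_reg x1 hx1pos).comp tendsto_natCast_atTop_atTop
          rwa [hx1c] at this
        have h2 : Tendsto (fun n : ℕ => L (↑n * x0) / L ↑n) atTop (nhds z) := by
          have := (hL_reg x0 hx0pos).comp tendsto_natCast_atTop_atTop
          rwa [hx0c] at this
        have h3 : Tendsto (fun n : ℕ => (n:ℝ) * (x1 - x0)) atTop atTop :=
          tendsto_natCast_atTop_atTop.atTop_mul_const (sub_pos.2 hx01)
        filter_upwards [hev0, h1.eventually_lt_const hyt, h2.eventually_const_lt haz,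
          h3.eventually_ge_atTop 1] with n hn0 hn1 hn2 hn3
        have hln : (0:ℝ) < L ↑n := by rw [hL_interp n]; exact hl_pos n
        set k := ⌊(n:ℝ) * x1⌋₊ with hk
        have hkle : (k:ℝ) ≤ (n:ℝ) * x1 := Nat.floor_le (by positivity)
        have hkn : k ≤ n := by
          have hn' : (0:ℝ) ≤ (n:ℝ) := Nat.cast_nonneg n
          have : (k:ℝ) ≤ (n:ℝ) := hkle.trans (by nlinarith)
          exact_mod_cast this
        have hLk : l k ≤ t * l n := by
          have hL1 : L (k:ℝ) ≤ L ((n:ℝ) * x1) :=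
            hL_mono.monotoneOn (mem_Ici.2 (Nat.cast_nonneg k))
              (mem_Ici.2 (by positivity)) hkle
          have hL2 : L ((n:ℝ) * x1) < t * L ↑n := (div_lt_iff₀ hln).1 hn1
          rw [← hL_interp k, ← hL_interp n]
          linarith
        have hkm : k ≤ mfun n := Nat.le_findGreatest hkn hLk
        have hx0k : (n:ℝ) * x0 ≤ (k:ℝ) := by
          have hfl := Nat.sub_one_lt_floor ((n:ℝ) * x1)
          rw [← hk] at hfl
          nlinarith
        have hlow : a * l n < l k := by
          have hL3 : L ((n:ℝ) * x0) ≤ L (k:ℝ) :=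
            hL_mono.monotoneOn (mem_Ici.2 (by positivity))
              (mem_Ici.2 (Nat.cast_nonneg k)) hx0k
          have hL4 : a * L ↑n < L ((n:ℝ) * x0) := (lt_div_iff₀ hln).1 hn2
          rw [← hL_interp k]
          rw [hL_interp n] at hL4
          linarith
        have hfin : a * l n < l (mfun n) := lt_of_lt_of_le hlow (hl_mono hkm)
        exact (lt_div_iff₀ (hl_pos n)).2 hfin
    · -- upper bound
      intro a ha
      filter_upwards [hev0] with n h0
      have hspec : l (mfun n) ≤ t * l n :=
        Nat.findGreatest_spec (P := fun m => l m ≤ t * l n) (Nat.zero_le n) h0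
      calc l (mfun n) / l n ≤ t := (div_le_iff₀ (hl_pos n)).2 (by linarith [hspec])
        _ < a := ha
  exact main.congr' (Filter.EventuallyEq.symm key)
end

section
/- Assume either (i) 0 < c < ∞ and there exists an increasing function L : [0,∞) → [0,∞) with L(n) = l_n for all n ∈ ℕ and L(tx)/L(t) → x^c as t → ∞ for every x > 0, or (ii) c = ∞ and there exists a nondecreasing function L : [0,∞) → [0,∞) with L(n) = l_n for all n ∈ ℕ such that, as t → ∞, L(tx)/L(t) → 0 for every 0 < x < 1 and L(tx)/L(t) → ∞ for every x > 1. Then τ_n → ∞ almost surely as n → ∞. -/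
open MeasureTheory Filter Set
open scoped ENNReal

/-- If `l` is monotone, positive, and tends to infinity, then
`∑ (1 - l n / l (n+1))` diverges. -/
lemma aux_not_summable (l : ℕ → ℝ) (hl_pos : ∀ n, 0 < l n) (hl_mono : Monotone l)
    (hl_top : Tendsto l atTop atTop) :
    ¬ Summable (fun n : ℕ => 1 - l n / l (n + 1)) := by
  intro hsum
  set g : ℕ → ℝ := fun n => 1 - l n / l (n + 1) with hg
  have hg_nonneg : ∀ n, 0 ≤ g n := by
    intro n
    have : l n / l (n + 1) ≤ 1 :=
      div_le_one_of_le₀ (hl_mono (Nat.le_succ n)) (hl_pos (n + 1)).le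
    simp [hg]; linarith
  -- g n → 0, hence eventually l n / l (n+1) ≥ 1/2
  have hg0 : Tendsto g atTop (nhds 0) := hsum.tendsto_atTop_zero
  have hev : ∀ᶠ n in atTop, (1 : ℝ) / 2 ≤ l n / l (n + 1) := by
    have := hg0.eventually (eventually_lt_nhds (show (0:ℝ) < 1/2 by norm_num))
    filter_upwards [this] with n hn
    simp only [hg] at hn
    linarith
  obtain ⟨N, hN⟩ := eventually_atTop.1 hev
  -- key log bound : for n ≥ N, log (l (n+1)) - log (l n) ≤ 2 * g n
  have hlog : ∀ n, N ≤ n → Real.log (l (n + 1)) - Real.log (l n) ≤ 2 * g n := by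
    intro n hn
    set a : ℝ := l n / l (n + 1) with ha
    have ha_pos : 0 < a := div_pos (hl_pos n) (hl_pos (n + 1))
    have ha_half : 1/2 ≤ a := hN n hn
    have h1 : Real.log (l (n + 1)) - Real.log (l n) = Real.log a⁻¹ := by
      rw [Real.log_inv, ha, Real.log_div (hl_pos n).ne' (hl_pos (n + 1)).ne']
      ring
    have h2 : Real.log a⁻¹ ≤ a⁻¹ - 1 :=
      Real.log_le_sub_one_of_pos (inv_pos.2 ha_pos)
    have h3 : a⁻¹ - 1 = (1 - a) / a := by field_simp
    have h4 : (1 - a) / a ≤ 2 * (1 - a) := by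
      rw [div_le_iff₀ ha_pos]
      have h1a : 0 ≤ 1 - a := by
        have : a ≤ 1 := div_le_one_of_le₀ (hl_mono (Nat.le_succ n)) (hl_pos (n + 1)).le
        linarith
      nlinarith
    have : g n = 1 - a := by simp [hg, ha]
    rw [this]
    calc Real.log (l (n + 1)) - Real.log (l n) = Real.log a⁻¹ := h1
      _ ≤ a⁻¹ - 1 := h2
      _ = (1 - a) / a := h3
      _ ≤ 2 * (1 - a) := h4
  -- telescoping bound: log (l (N + k)) ≤ log (l N) + 2 * ∑' g
  have hbound : ∀ k : ℕ, Real.log (l (N + k)) ≤ Real.log (l N) + 2 * ∑' n, g n := by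
    intro k
    have htel : ∑ j ∈ Finset.range k,
        (Real.log (l (N + (j + 1))) - Real.log (l (N + j)))
        = Real.log (l (N + k)) - Real.log (l N) := by
      simpa using Finset.sum_range_sub (fun j => Real.log (l (N + j))) k
    have hle : ∑ j ∈ Finset.range k,
        (Real.log (l (N + (j + 1))) - Real.log (l (N + j)))
        ≤ ∑ j ∈ Finset.range k, 2 * g (N + j) := by
      refine Finset.sum_le_sum fun j _ => ?_
      have := hlog (N + j) (Nat.le_add_right N j)
      simpa [Nat.add_assoc] using this
    have hsumN : Summable (fun j => g (N + j)) :=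
      hsum.comp_injective (add_right_injective N)
    have hsum2 : Summable (fun j => 2 * g (N + j)) := hsumN.mul_left 2
    have hle2 : ∑ j ∈ Finset.range k, 2 * g (N + j) ≤ ∑' j, 2 * g (N + j) := by
      refine Summable.sum_le_tsum _ (fun j _ => ?_) hsum2
      exact mul_nonneg (by norm_num) (hg_nonneg _)
    have hle3 : ∑' j, 2 * g (N + j) ≤ 2 * ∑' n, g n := by
      rw [tsum_mul_left]
      gcongr 2 * ?_
      exact Summable.tsum_le_tsum_of_inj (fun j => N + j) (add_right_injective N)
        (fun i _ => hg_nonneg i) (fun j => le_refl _) hsumN hsum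
    have := htel ▸ hle
    linarith [hle2.trans hle3]
  -- but log (l n) → ∞
  have hlogtop : Tendsto (fun n => Real.log (l n)) atTop atTop :=
    Real.tendsto_log_atTop.comp hl_top
  obtain ⟨m, hm1, hm2⟩ := ((hlogtop.eventually_gt_atTop
    (Real.log (l N) + 2 * ∑' n, g n)).and (eventually_ge_atTop N)).exists
  have := hbound (m - N)
  rw [Nat.add_sub_cancel' hm2] at this
  linarith

/-- If `l_n` is regularly varying with index `c ∈ (0,∞)` or has fast increments
(`c = ∞`), then `τ_n → ∞` almost surely. -/
theorem tau_tendsto_atTop_ae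
    {Ω : Type*} [MeasurableSpace Ω] (ℙ : Measure Ω) [IsProbabilityMeasure ℙ]
    (l : ℕ → ℝ) (hl_pos : ∀ n, 0 < l n) (hl_mono : Monotone l)
    (ε : ℕ → Ω → ℕ)
    (hε_le : ∀ n ω, ε n ω ≤ 1) (hε_meas : ∀ n, Measurable (ε n))
    (hε_dist : ∀ n : ℕ, 1 ≤ n →
      ℙ {ω | ε n ω = 1} = ENNReal.ofReal (1 - l (n - 1) / l n))
    (hindep : ProbabilityTheory.iIndepFun
      (m := fun _ : ℕ => (inferInstance : MeasurableSpace ℕ)) ε ℙ)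
    (hL : (∃ c : ℝ, 0 < c ∧ ∃ L : ℝ → ℝ,
            (∀ x : ℝ, 0 ≤ x → 0 ≤ L x) ∧ StrictMonoOn L (Ici (0:ℝ)) ∧
            (∀ n : ℕ, L n = l n) ∧
            (∀ x : ℝ, 0 < x →
              Tendsto (fun t : ℝ => L (t * x) / L t) atTop (nhds (x ^ c)))) ∨
          (∃ L : ℝ → ℝ,
            (∀ x : ℝ, 0 ≤ x → 0 ≤ L x) ∧ MonotoneOn L (Ici (0:ℝ)) ∧
            (∀ n : ℕ, L n = l n) ∧
            (∀ x : ℝ, 0 < x → x < 1 →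
              Tendsto (fun t : ℝ => L (t * x) / L t) atTop (nhds 0)) ∧
            (∀ x : ℝ, 1 < x →
              Tendsto (fun t : ℝ => L (t * x) / L t) atTop atTop))) :
    ∀ᵐ ω ∂ℙ, Tendsto (fun n : ℕ => tauProc ε n ω) atTop atTop := by
  classical
  -- Step 1: l tends to infinity
  have hl_top : Tendsto l atTop atTop := by
    rcases tendsto_of_monotone hl_mono with h | ⟨A, hA⟩
    · exact h
    · exfalso
      have hA0 : l 0 ≤ A :=
        ge_of_tendsto hA (Eventually.of_forall fun n => hl_mono (Nat.zero_le n))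
      have hApos : 0 < A := lt_of_lt_of_le (hl_pos 0) hA0
      have hmul : Tendsto (fun n : ℕ => n * 2) atTop atTop :=
        tendsto_atTop_mono (fun n => by simp only [id_eq]; omega) tendsto_id
      have h2n : Tendsto (fun n : ℕ => l (n * 2)) atTop (nhds A) := hA.comp hmul
      have hratio : Tendsto (fun n : ℕ => l (n * 2) / l n) atTop (nhds 1) := by
        have := h2n.div hA hApos.ne'
        rw [div_self hApos.ne'] at this
        exact this
      rcases hL with ⟨c, hc, L, _, _, hLn, hlim⟩ | ⟨L, _, _, hLn, _, hinf⟩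
      · have h2 : Tendsto (fun n : ℕ => L ((n : ℝ) * 2) / L n) atTop
            (nhds ((2 : ℝ) ^ c)) :=
          (hlim 2 (by norm_num)).comp tendsto_natCast_atTop_atTop
        have heq : (fun n : ℕ => L ((n : ℝ) * 2) / L n)
            = fun n : ℕ => l (n * 2) / l n := by
          funext n
          rw [show ((n : ℝ) * 2) = ((n * 2 : ℕ) : ℝ) by push_cast; ring, hLn, hLn]
        rw [heq] at h2
        have := tendsto_nhds_unique h2 hratio
        have h1 : (1 : ℝ) < (2 : ℝ) ^ c :=
          (Real.one_lt_rpow_iff_of_pos (by norm_num)).2 (Or.inl ⟨one_lt_two, hc⟩)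
        rw [this] at h1
        exact lt_irrefl _ h1
      · have h2 : Tendsto (fun n : ℕ => L ((n : ℝ) * 2) / L n) atTop atTop :=
          (hinf 2 one_lt_two).comp tendsto_natCast_atTop_atTop
        have heq : (fun n : ℕ => L ((n : ℝ) * 2) / L n)
            = fun n : ℕ => l (n * 2) / l n := by
          funext n
          rw [show ((n : ℝ) * 2) = ((n * 2 : ℕ) : ℝ) by push_cast; ring, hLn, hLn]
        rw [heq] at h2
        exact hratio.not_tendsto (disjoint_nhds_atTop 1) h2
  -- Step 2: the events
  set s : ℕ → Set Ω := fun n => ε n ⁻¹' {1} with hs_def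
  have hsm : ∀ n, MeasurableSet (s n) := fun n => hε_meas n (measurableSet_singleton 1)
  have hsind : ProbabilityTheory.iIndepSet s ℙ := by
    rw [ProbabilityTheory.iIndepSet_iff_meas_biInter hsm]
    intro S
    exact hindep.measure_inter_preimage_eq_mul S
      (sets := fun _ => ({1} : Set ℕ)) (fun i _ => measurableSet_singleton 1)
  have hmeasn : ∀ n : ℕ, ℙ (s (n + 1)) = ENNReal.ofReal (1 - l n / l (n + 1)) := by
    intro n
    have := hε_dist (n + 1) (Nat.le_add_left 1 n)
    simpa [hs_def, Set.preimage, Set.mem_singleton_iff] using this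
  have hnonneg : ∀ n : ℕ, 0 ≤ 1 - l n / l (n + 1) := by
    intro n
    have : l n / l (n + 1) ≤ 1 :=
      div_le_one_of_le₀ (hl_mono (Nat.le_succ n)) (hl_pos (n + 1)).le
    linarith
  -- Step 3: divergence of the sum of probabilities
  have htsum : ∑' n, ℙ (s n) = ∞ := by
    have h1 : ∑' n, ℙ (s (n + 1)) = ∞ := by
      by_contra h
      apply aux_not_summable l hl_pos hl_mono hl_top
      have hsummable := ENNReal.summable_toReal h
      refine hsummable.congr fun n => ?_
      rw [hmeasn n, ENNReal.toReal_ofReal (hnonneg n)]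
    rw [eq_top_iff, ← h1]
    exact ENNReal.tsum_comp_le_tsum_of_injective (fun a b => by omega) fun n => ℙ (s n)
  -- Step 4: Borel-Cantelli II
  have hone := ProbabilityTheory.measure_limsup_eq_one hsm hsind htsum
  have hae : ∀ᵐ ω ∂ℙ, ω ∈ limsup s atTop := by
    rw [ae_iff]
    have hc : {ω | ¬ ω ∈ limsup s atTop} = (limsup s atTop)ᶜ := rfl
    rw [hc, prob_compl_eq_zero_iff (MeasurableSet.measurableSet_limsup hsm)]
    exact hone
  filter_upwards [hae] with ω hω
  have hfreq : ∃ᶠ n in atTop, ω ∈ s n := mem_limsup_iff_frequently_mem.1 hω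
  refine tendsto_atTop.2 fun B => ?_
  obtain ⟨k, hkB, hk⟩ := frequently_atTop.1 hfreq (max B 1)
  filter_upwards [eventually_ge_atTop k] with n hn
  calc B ≤ k := le_trans (le_max_left B 1) hkB
    _ = id k := rfl
    _ ≤ tauProc ε n ω := Finset.le_sup (Finset.mem_filter.2
        ⟨Finset.mem_Icc.2 ⟨le_trans (le_max_right B 1) hkB, hn⟩, hk⟩)
end

section
/- The following hold as n → ∞. (i) If 0 < c < ∞ and there exists an increasing function L : [0,∞) → [0,∞) with L(n) = l_n for all n ∈ ℕ and L(tx)/L(t) → x^c as t → ∞ for every x > 0, then for every t ∈ [0,1], P(τ_n/n ≤ t) → t^c; that is, τ_n/n converges in distribution to the Beta(c,1) distribution. (ii) If there exists a nondecreasing L with L(n) = l_n and L(tx)/L(t) → 1 as t → ∞ for every x > 0 (slow variation, c = 0), then τ_n/n → 0 in probability. (iii) If there exists a nondecreasing L with L(n) = l_n such that L(tx)/L(t) → 0 for every 0 < x < 1 and L(tx)/L(t) → ∞ for every x > 1 as t → ∞ (c = ∞), then τ_n/n → 1 in probability. -/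
open MeasureTheory Filter Set
open scoped ENNReal

section aux

variable {Ω : Type*}

lemma tauProc_le_n (ε : ℕ → Ω → ℕ) (n : ℕ) (ω : Ω) : tauProc ε n ω ≤ n :=
  Finset.sup_le fun k hk => (Finset.mem_Icc.1 (Finset.mem_filter.1 hk).1).2

lemma tauProc_le_set (ε : ℕ → Ω → ℕ) (hε_le : ∀ k ω, ε k ω ≤ 1) (n m : ℕ) :
    {ω : Ω | tauProc ε n ω ≤ m} = ⋂ k ∈ Finset.Icc (m+1) n, (ε k) ⁻¹' {0} := by
  ext ω
  simp only [mem_setOf_eq, mem_iInter, mem_preimage, mem_singleton_iff, Finset.mem_Icc]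
  constructor
  · rintro h k ⟨hk1, hk2⟩
    by_contra hne
    have h1 : ε k ω = 1 := le_antisymm (hε_le k ω) (Nat.one_le_iff_ne_zero.2 hne)
    have hmem : k ∈ (Finset.Icc 1 n).filter fun j => ε j ω = 1 := by
      simp only [Finset.mem_filter, Finset.mem_Icc]
      exact ⟨⟨by omega, hk2⟩, h1⟩
    have hks : k ≤ tauProc ε n ω := by exact Finset.le_sup (f := id) hmem
    omega
  · intro h
    refine Finset.sup_le fun k hk => ?_
    simp only [Finset.mem_filter, Finset.mem_Icc] at hk
    simp only [id_eq]
    by_contra hgt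
    push_neg at hgt
    exact absurd (h k ⟨by omega, hk.1.2⟩) (by simp [hk.2])

lemma tauProc_meas_set [MeasurableSpace Ω] (ε : ℕ → Ω → ℕ) (hε_le : ∀ k ω, ε k ω ≤ 1)
    (hε_meas : ∀ k, Measurable (ε k)) (n m : ℕ) :
    MeasurableSet {ω : Ω | tauProc ε n ω ≤ m} := by
  rw [tauProc_le_set ε hε_le n m]
  exact Finset.measurableSet_biInter _ fun k _ => (hε_meas k) (measurableSet_singleton 0)

lemma telescope_prod (l : ℕ → ℝ) (hl_pos : ∀ n, 0 < l n) (m n : ℕ) (h : m ≤ n) :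
    ∏ k ∈ Finset.Icc (m+1) n, (l (k-1) / l k) = l m / l n := by
  induction n, h using Nat.le_induction with
  | base =>
      rw [Finset.Icc_eq_empty_of_lt (Nat.lt_succ_self m), Finset.prod_empty,
        div_self (hl_pos m).ne']
  | succ n hmn ih =>
      rw [Finset.prod_Icc_succ_top (by omega), ih, Nat.add_sub_cancel]
      have h1 := (hl_pos n).ne'
      have h2 := (hl_pos (n+1)).ne'
      field_simp

lemma meas_tauProc_le [MeasurableSpace Ω] (ℙ : Measure Ω) [IsProbabilityMeasure ℙ]
    (l : ℕ → ℝ) (hl_pos : ∀ n, 0 < l n) (hl_mono : Monotone l)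
    (ε : ℕ → Ω → ℕ)
    (hε_le : ∀ n ω, ε n ω ≤ 1) (hε_meas : ∀ n, Measurable (ε n))
    (hε_dist : ∀ n : ℕ, 1 ≤ n →
      ℙ {ω | ε n ω = 1} = ENNReal.ofReal (1 - l (n - 1) / l n))
    (hindep : ProbabilityTheory.iIndepFun
      (m := fun _ : ℕ => (inferInstance : MeasurableSpace ℕ)) ε ℙ)
    (n m : ℕ) (hm : m ≤ n) :
    ℙ {ω | tauProc ε n ω ≤ m} = ENNReal.ofReal (l m / l n) := by
  rw [tauProc_le_set ε hε_le n m,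
    hindep.meas_biInter (fun k _ => ⟨{0}, measurableSet_singleton 0, rfl⟩)]
  have hterm : ∀ k ∈ Finset.Icc (m+1) n,
      ℙ ((ε k) ⁻¹' {0}) = ENNReal.ofReal (l (k-1) / l k) := by
    intro k hk
    simp only [Finset.mem_Icc] at hk
    have hcompl : (ε k) ⁻¹' {0} = ((ε k) ⁻¹' {1})ᶜ := by
      ext ω
      simp only [mem_preimage, mem_singleton_iff, mem_compl_iff]
      have := hε_le k ω
      omega
    have h1 : ℙ ((ε k) ⁻¹' {1}) = ENNReal.ofReal (1 - l (k-1) / l k) :=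
      hε_dist k (by omega)
    have hr0 : (0:ℝ) ≤ l (k-1) / l k := (div_pos (hl_pos _) (hl_pos _)).le
    have hr1 : l (k-1) / l k ≤ 1 := div_le_one_of_le₀ (hl_mono (by omega)) (hl_pos k).le
    rw [hcompl, measure_compl ((hε_meas k) (measurableSet_singleton 1)) (measure_ne_top _ _),
      h1, measure_univ, ← ENNReal.ofReal_one, ← ENNReal.ofReal_sub _ (by linarith)]
    congr 1
    ring
  rw [Finset.prod_congr rfl hterm,
    ← ENNReal.ofReal_prod_of_nonneg (fun k _ => (div_pos (hl_pos _) (hl_pos _)).le),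
    telescope_prod l hl_pos m n hm]

lemma tau_div_le_set (ε : ℕ → Ω → ℕ) (n : ℕ) (hn : 1 ≤ n) (t : ℝ) (ht : 0 ≤ t) :
    {ω : Ω | (tauProc ε n ω : ℝ) / n ≤ t} = {ω : Ω | tauProc ε n ω ≤ ⌊(n:ℝ) * t⌋₊} := by
  have hn' : (0:ℝ) < n := by exact_mod_cast hn
  ext ω
  rw [mem_setOf_eq, mem_setOf_eq, div_le_iff₀ hn',
    Nat.le_floor_iff (mul_nonneg hn'.le ht), mul_comm]

lemma l_tendsto_atTop (l : ℕ → ℝ) (hl_pos : ∀ n, 0 < l n) (hl_mono : Monotone l)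
    (h : ¬ Tendsto (fun n : ℕ => l (2*n) / l n) atTop (nhds 1)) :
    Tendsto l atTop atTop := by
  rcases tendsto_of_monotone hl_mono with h' | ⟨b, hb⟩
  · exact h'
  · exfalso
    apply h
    have hb0 : 0 < b := lt_of_lt_of_le (hl_pos 0) (ge_of_tendsto' hb fun n => hl_mono (Nat.zero_le n))
    have h2n : Tendsto (fun n : ℕ => l (2*n)) atTop (nhds b) :=
      hb.comp (tendsto_atTop_mono (fun n => by simp only [id_eq]; omega) tendsto_id)
    have := h2n.div hb hb0.ne'
    rwa [div_self hb0.ne'] at this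

lemma ratio_tendsto (l : ℕ → ℝ) (hl_pos : ∀ n, 0 < l n)
    (L : ℝ → ℝ) (hLmono : MonotoneOn L (Ici (0:ℝ))) (hLl : ∀ n : ℕ, L n = l n)
    (c : ℝ)
    (hlim : ∀ x : ℝ, 0 < x → Tendsto (fun n : ℕ => L (n * x) / L n) atTop (nhds (x ^ c)))
    (t : ℝ) (ht : 0 < t) (ht1 : t ≤ 1) :
    Tendsto (fun n : ℕ => l ⌊(n:ℝ) * t⌋₊ / l n) atTop (nhds (t ^ c)) := by
  rw [Metric.tendsto_nhds]
  intro δ hδ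
  have hcont : ContinuousAt (fun x : ℝ => x ^ c) t :=
    Real.continuousAt_rpow_const t c (Or.inl ht.ne')
  obtain ⟨r, hr0, hr⟩ := Metric.continuousAt_iff.1 hcont (δ/2) (by linarith)
  set s := max (t/2) (t - r/2) with hs_def
  have hs0 : 0 < s := lt_of_lt_of_le (by linarith) (le_max_left _ _)
  have hst : s < t := max_lt (by linarith) (by linarith)
  have hsc : t ^ c - δ/2 < s ^ c := by
    have hds : dist s t < r := by
      rw [Real.dist_eq, abs_of_nonpos (by linarith)]
      have : t - r/2 ≤ s := le_max_right _ _
      linarith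
    have h' := hr hds
    rw [Real.dist_eq, abs_lt] at h'
    linarith [h'.1]
  have h1 := (Metric.tendsto_nhds.1 (hlim t ht)) (δ/2) (by linarith)
  have h2 := (Metric.tendsto_nhds.1 (hlim s hs0)) (δ/2) (by linarith)
  have h3 : ∀ᶠ n : ℕ in atTop, (1:ℝ)/(t - s) ≤ n :=
    tendsto_natCast_atTop_atTop.eventually_ge_atTop _
  filter_upwards [h1, h2, h3, eventually_ge_atTop 1] with n h1 h2 h3 h4
  have hn0 : (0:ℝ) < n := by exact_mod_cast h4
  have hlnpos : 0 < l n := hl_pos n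
  set m := ⌊(n:ℝ) * t⌋₊ with hm
  have hm_ub : (m:ℝ) ≤ (n:ℝ) * t := Nat.floor_le (by positivity)
  have hm_lb : (n:ℝ) * s ≤ m := by
    have hfl : (n:ℝ) * t - 1 < m := Nat.sub_one_lt_floor _
    have h5 : (1:ℝ) ≤ (n:ℝ) * (t - s) := by
      rw [div_le_iff₀ (by linarith)] at h3
      linarith
    nlinarith
  have hub : l m / l n ≤ L ((n:ℝ) * t) / L n := by
    rw [hLl n]
    exact (div_le_div_iff_of_pos_right hlnpos).2
      (by rw [← hLl m]; exact hLmono (mem_Ici.2 (by positivity)) (mem_Ici.2 (by positivity)) hm_ub)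
  have hlb : L ((n:ℝ) * s) / L n ≤ l m / l n := by
    rw [hLl n]
    refine (div_le_div_iff_of_pos_right hlnpos).2 ?_
    rw [← hLl m]
    exact hLmono (mem_Ici.2 (by positivity)) (mem_Ici.2 (by positivity)) hm_lb
  rw [Real.dist_eq, abs_lt] at h1 h2 ⊢
  constructor
  · linarith [h2.1, hlb]
  · linarith [h1.2, hub]

end aux

/-- Limit behavior of `τ_n/n`: (i) in the regularly varying case with index `c ∈ (0,∞)`,
`P(τ_n/n ≤ t) → t^c` for all `t ∈ [0,1]` (Beta(c,1) limit); (ii) in the slowly varying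
case `τ_n/n → 0` in probability; (iii) in the fast increments case `τ_n/n → 1` in
probability. -/
theorem tau_div_n_limit
    {Ω : Type*} [MeasurableSpace Ω] (ℙ : Measure Ω) [IsProbabilityMeasure ℙ]
    (l : ℕ → ℝ) (hl_pos : ∀ n, 0 < l n) (hl_mono : Monotone l)
    (ε : ℕ → Ω → ℕ)
    (hε_le : ∀ n ω, ε n ω ≤ 1) (hε_meas : ∀ n, Measurable (ε n))
    (hε_dist : ∀ n : ℕ, 1 ≤ n →
      ℙ {ω | ε n ω = 1} = ENNReal.ofReal (1 - l (n - 1) / l n))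
    (hindep : ProbabilityTheory.iIndepFun
      (m := fun _ : ℕ => (inferInstance : MeasurableSpace ℕ)) ε ℙ) :
    -- (i) regularly varying case, `0 < c < ∞`
    (∀ c : ℝ, 0 < c →
      ∀ L : ℝ → ℝ, (∀ x : ℝ, 0 ≤ x → 0 ≤ L x) → StrictMonoOn L (Ici (0:ℝ)) →
        (∀ n : ℕ, L n = l n) →
        (∀ x : ℝ, 0 < x →
          Tendsto (fun t : ℝ => L (t * x) / L t) atTop (nhds (x ^ c))) →
        ∀ t : ℝ, t ∈ Icc (0:ℝ) 1 →
          Tendsto (fun n : ℕ =>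
              (ℙ {ω | (tauProc ε n ω : ℝ) / n ≤ t}).toReal) atTop (nhds (t ^ c))) ∧
    -- (ii) slowly varying case, `c = 0`
    ((∃ L : ℝ → ℝ, (∀ x : ℝ, 0 ≤ x → 0 ≤ L x) ∧ MonotoneOn L (Ici (0:ℝ)) ∧
        (∀ n : ℕ, L n = l n) ∧
        (∀ x : ℝ, 0 < x → Tendsto (fun t : ℝ => L (t * x) / L t) atTop (nhds 1))) →
      TendstoInMeasure ℙ (fun (n : ℕ) (ω : Ω) => (tauProc ε n ω : ℝ) / n) atTop
        (fun _ => (0:ℝ))) ∧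
    -- (iii) fast increments case, `c = ∞`
    ((∃ L : ℝ → ℝ, (∀ x : ℝ, 0 ≤ x → 0 ≤ L x) ∧ MonotoneOn L (Ici (0:ℝ)) ∧
        (∀ n : ℕ, L n = l n) ∧
        (∀ x : ℝ, 0 < x → x < 1 →
          Tendsto (fun t : ℝ => L (t * x) / L t) atTop (nhds 0)) ∧
        (∀ x : ℝ, 1 < x →
          Tendsto (fun t : ℝ => L (t * x) / L t) atTop atTop)) →
      TendstoInMeasure ℙ (fun (n : ℕ) (ω : Ω) => (tauProc ε n ω : ℝ) / n) atTop
        (fun _ => (1:ℝ))) := by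
  refine ⟨?_, ?_, ?_⟩
  -- Part (i)
  · intro c hc L hL0 hLsm hLl hlim t ht
    have hLmono : MonotoneOn L (Ici (0:ℝ)) := hLsm.monotoneOn
    have hlimN : ∀ x : ℝ, 0 < x →
        Tendsto (fun n : ℕ => L ((n:ℝ) * x) / L n) atTop (nhds (x ^ c)) :=
      fun x hx => (hlim x hx).comp tendsto_natCast_atTop_atTop
    have hmeas_eq : ∀ᶠ n : ℕ in atTop,
        (ℙ {ω | (tauProc ε n ω : ℝ) / n ≤ t}).toReal = l ⌊(n:ℝ) * t⌋₊ / l n := by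
      filter_upwards [eventually_ge_atTop 1] with n hn
      have hn0 : (0:ℝ) < n := by exact_mod_cast hn
      have hnt : (n:ℝ) * t ≤ (n:ℝ) := mul_le_of_le_one_right hn0.le ht.2
      have hfl : ⌊(n:ℝ) * t⌋₊ ≤ n := by
        have := Nat.floor_le_floor hnt
        simpa using this
      rw [tau_div_le_set ε n hn t ht.1,
        meas_tauProc_le ℙ l hl_pos hl_mono ε hε_le hε_meas hε_dist hindep n _ hfl,
        ENNReal.toReal_ofReal (div_pos (hl_pos _) (hl_pos _)).le]
    rcases eq_or_lt_of_le ht.1 with h0 | htpos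
    · -- t = 0
      have hne : ¬ Tendsto (fun n : ℕ => l (2*n) / l n) atTop (nhds 1) := by
        intro hcon
        have h2 : Tendsto (fun n : ℕ => l (2*n) / l n) atTop (nhds ((2:ℝ) ^ c)) := by
          refine (hlimN 2 two_pos).congr fun n => ?_
          have hcast : ((2*n : ℕ) : ℝ) = (n:ℝ) * 2 := by push_cast; ring
          rw [← hLl n, ← hLl (2*n), hcast]
        have huniq := tendsto_nhds_unique hcon h2
        have hgt : (1:ℝ) < 2 ^ c :=
          (Real.one_lt_rpow_iff_of_pos two_pos).2 (Or.inl ⟨one_lt_two, hc⟩)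
        linarith
      have hl0 : Tendsto (fun n : ℕ => l 0 / l n) atTop (nhds 0) :=
        Tendsto.div_atTop tendsto_const_nhds (l_tendsto_atTop l hl_pos hl_mono hne)
      subst h0
      rw [Real.zero_rpow hc.ne']
      refine Tendsto.congr' ?_ hl0
      filter_upwards [hmeas_eq] with n hn
      rw [hn]
      norm_num
    · -- 0 < t
      exact Tendsto.congr' (hmeas_eq.mono fun n h => h.symm)
        (ratio_tendsto l hl_pos L hLmono hLl c hlimN t htpos ht.2)
  -- Part (ii)
  · rintro ⟨L, hL0, hLmono, hLl, hlim⟩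
    refine tendstoInMeasure_iff_dist.2 fun δ hδ => ?_
    set δ' := min δ 1 with hδ'def
    have hδ'0 : 0 < δ' := lt_min hδ one_pos
    have hδ'1 : δ' ≤ 1 := min_le_right _ _
    have hδ'δ : δ' ≤ δ := min_le_left _ _
    have hlimN : ∀ x : ℝ, 0 < x →
        Tendsto (fun n : ℕ => L ((n:ℝ) * x) / L n) atTop (nhds 1) :=
      fun x hx => (hlim x hx).comp tendsto_natCast_atTop_atTop
    have hratio : Tendsto (fun n : ℕ => l (⌈(n:ℝ) * δ'⌉₊ - 1) / l n) atTop (nhds 1) := by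
      refine tendsto_of_tendsto_of_tendsto_of_le_of_le' (hlimN (δ'/2) (by positivity))
        tendsto_const_nhds ?_ ?_
      · filter_upwards [tendsto_natCast_atTop_atTop.eventually_ge_atTop ((2:ℝ)/δ'),
          eventually_ge_atTop 1] with n hn hn1
        have hn0 : (0:ℝ) < n := by exact_mod_cast hn1
        have h2 : (2:ℝ) ≤ (n:ℝ) * δ' := by
          rw [div_le_iff₀ hδ'0] at hn; linarith
        set k := ⌈(n:ℝ) * δ'⌉₊ with hk
        have hk1 : 1 ≤ k := Nat.ceil_pos.2 (by positivity)
        have hkub : (n:ℝ) * δ' ≤ k := Nat.le_ceil _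
        have hkl : ((k - 1 : ℕ) : ℝ) = (k:ℝ) - 1 := by
          rw [Nat.cast_sub hk1, Nat.cast_one]
        have hge : (n:ℝ) * (δ'/2) ≤ ((k - 1 : ℕ) : ℝ) := by
          rw [hkl]; linarith
        have hLle : L ((n:ℝ) * (δ'/2)) ≤ l (k-1) := by
          rw [← hLl (k-1)]
          exact hLmono (mem_Ici.2 (by positivity))
            (mem_Ici.2 (le_trans (by positivity) hge)) hge
        rw [hLl n]
        exact (div_le_div_iff_of_pos_right (hl_pos n)).2 hLle
      · filter_upwards [eventually_ge_atTop 1] with n hn1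
        have hn0 : (0:ℝ) < n := by exact_mod_cast hn1
        have hle : ⌈(n:ℝ) * δ'⌉₊ - 1 ≤ n := by
          have h1 : ⌈(n:ℝ) * δ'⌉₊ ≤ n := by
            refine Nat.ceil_le.2 ?_
            exact mul_le_of_le_one_right hn0.le hδ'1
          omega
        exact div_le_one_of_le₀ (hl_mono hle) (hl_pos n).le
    have hofReal : Tendsto (fun n : ℕ =>
        ENNReal.ofReal (l (⌈(n:ℝ) * δ'⌉₊ - 1) / l n)) atTop (nhds 1) := by
      have := ENNReal.tendsto_ofReal hratio
      simpa using this
    have hone : Tendsto (fun n : ℕ =>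
        1 - ENNReal.ofReal (l (⌈(n:ℝ) * δ'⌉₊ - 1) / l n)) atTop (nhds 0) := by
      have hc := (ENNReal.continuous_sub_left ENNReal.one_ne_top).tendsto 1
      have := hc.comp hofReal
      simpa [Function.comp_def] using this
    have hmain : Tendsto (fun n : ℕ =>
        ℙ {ω | δ' ≤ dist ((tauProc ε n ω : ℝ)/n) 0}) atTop (nhds 0) := by
      refine Tendsto.congr' ?_ hone
      filter_upwards [eventually_ge_atTop 1] with n hn1
      have hn0 : (0:ℝ) < n := by exact_mod_cast hn1
      have hk1 : 1 ≤ ⌈(n:ℝ) * δ'⌉₊ := Nat.ceil_pos.2 (by positivity)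
      have hset : {ω : Ω | δ' ≤ dist ((tauProc ε n ω : ℝ)/n) 0}
          = {ω : Ω | tauProc ε n ω ≤ ⌈(n:ℝ) * δ'⌉₊ - 1}ᶜ := by
        ext ω
        have htau0 : (0:ℝ) ≤ (tauProc ε n ω : ℝ)/n := by positivity
        simp only [mem_setOf_eq, mem_compl_iff, Real.dist_eq, sub_zero,
          abs_of_nonneg htau0, not_le]
        rw [le_div_iff₀ hn0, mul_comm]
        constructor
        · intro h
          have hcl : ⌈(n:ℝ) * δ'⌉₊ ≤ tauProc ε n ω := Nat.ceil_le.2 (by exact_mod_cast h)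
          omega
        · intro h
          have h' : ⌈(n:ℝ) * δ'⌉₊ ≤ tauProc ε n ω := by omega
          exact_mod_cast Nat.ceil_le.1 h'
      have hle : ⌈(n:ℝ) * δ'⌉₊ - 1 ≤ n := by
        have h1 : ⌈(n:ℝ) * δ'⌉₊ ≤ n := Nat.ceil_le.2 (mul_le_of_le_one_right hn0.le hδ'1)
        omega
      rw [hset, measure_compl (tauProc_meas_set ε hε_le hε_meas n _) (measure_ne_top _ _),
        meas_tauProc_le ℙ l hl_pos hl_mono ε hε_le hε_meas hε_dist hindep n _ hle,
        measure_univ]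
    refine tendsto_of_tendsto_of_tendsto_of_le_of_le tendsto_const_nhds hmain
      (fun n => zero_le) (fun n => measure_mono fun ω h => le_trans hδ'δ h)
  -- Part (iii)
  · rintro ⟨L, hL0, hLmono, hLl, hlim0, hlimtop⟩
    refine tendstoInMeasure_iff_dist.2 fun δ hδ => ?_
    set δ' := min δ (1/2) with hδ'def
    have hδ'0 : 0 < δ' := lt_min hδ (by norm_num)
    have hδ'half : δ' ≤ 1/2 := min_le_right _ _
    have hδ'δ : δ' ≤ δ := min_le_left _ _
    have hx0 : (0:ℝ) < 1 - δ' := by linarith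
    have hx1 : 1 - δ' < 1 := by linarith
    have hlimN : Tendsto (fun n : ℕ => L ((n:ℝ) * (1 - δ')) / L n) atTop (nhds 0) :=
      (hlim0 (1 - δ') hx0 hx1).comp tendsto_natCast_atTop_atTop
    have hratio : Tendsto (fun n : ℕ => l ⌊(n:ℝ) * (1 - δ')⌋₊ / l n) atTop (nhds 0) := by
      refine tendsto_of_tendsto_of_tendsto_of_le_of_le' tendsto_const_nhds hlimN
        (Eventually.of_forall fun n => (div_pos (hl_pos _) (hl_pos _)).le) ?_
      refine Eventually.of_forall fun n => ?_
      have hfl : (⌊(n:ℝ) * (1 - δ')⌋₊ : ℝ) ≤ (n:ℝ) * (1 - δ') := Nat.floor_le (by positivity)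
      have hLle : l ⌊(n:ℝ) * (1 - δ')⌋₊ ≤ L ((n:ℝ) * (1 - δ')) := by
        rw [← hLl ⌊(n:ℝ) * (1 - δ')⌋₊]
        exact hLmono (mem_Ici.2 (by positivity)) (mem_Ici.2 (by positivity)) hfl
      rw [hLl n]
      exact (div_le_div_iff_of_pos_right (hl_pos n)).2 hLle
    have hofReal : Tendsto (fun n : ℕ =>
        ENNReal.ofReal (l ⌊(n:ℝ) * (1 - δ')⌋₊ / l n)) atTop (nhds 0) := by
      have := ENNReal.tendsto_ofReal hratio
      simpa using this
    have hmain : Tendsto (fun n : ℕ =>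
        ℙ {ω | δ' ≤ dist ((tauProc ε n ω : ℝ)/n) 1}) atTop (nhds 0) := by
      refine Tendsto.congr' ?_ hofReal
      filter_upwards [eventually_ge_atTop 1] with n hn1
      have hn0 : (0:ℝ) < n := by exact_mod_cast hn1
      have hset : {ω : Ω | δ' ≤ dist ((tauProc ε n ω : ℝ)/n) 1}
          = {ω : Ω | (tauProc ε n ω : ℝ)/n ≤ 1 - δ'} := by
        ext ω
        have hτn : (tauProc ε n ω : ℝ)/n ≤ 1 := by
          rw [div_le_one hn0]
          exact_mod_cast tauProc_le_n ε n ω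
        simp only [mem_setOf_eq, Real.dist_eq]
        rw [abs_of_nonpos (by linarith)]
        constructor <;> intro h <;> linarith
      have hfln : ⌊(n:ℝ) * (1 - δ')⌋₊ ≤ n := by
        have hnt : (n:ℝ) * (1 - δ') ≤ (n:ℝ) := mul_le_of_le_one_right hn0.le (by linarith)
        have := Nat.floor_le_floor hnt
        simpa using this
      rw [hset, tau_div_le_set ε n hn1 (1 - δ') hx0.le,
        meas_tauProc_le ℙ l hl_pos hl_mono ε hε_le hε_meas hε_dist hindep n _ hfln]
    refine tendsto_of_tendsto_of_tendsto_of_le_of_le tendsto_const_nhds hmain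
      (fun n => zero_le) (fun n => measure_mono fun ω h => le_trans hδ'δ h)
end

section
/- Assume q_n → q ∈ [0,1] as n → ∞, and write p(x) = q^x (1−q)^{1−x} for x ∈ {0,1}. Then τ_n/n and ν_{τ_n} are asymptotically independent, in the following sense, for every x ∈ {0,1}: (i) if 0 < c < ∞ and there exists an increasing function L : [0,∞) → [0,∞) with L(n) = l_n for all n ∈ ℕ and L(tx)/L(t) → x^c as t → ∞ for every x > 0, then for every t ∈ [0,1], P(τ_n/n ≤ t, ν_{τ_n} = x) → t^c p(x); (ii) if there exists a nondecreasing L with L(n) = l_n and L(tx)/L(t) → 1 for every x > 0 (c = 0) and moreover l_n → ∞, then for every t ∈ (0,1], P(τ_n/n ≤ t, ν_{τ_n} = x) → p(x); (iii) if there exists a nondecreasing L with L(n) = l_n, L(tx)/L(t) → 0 for 0 < x < 1 and L(tx)/L(t) → ∞ for x > 1 (c = ∞), then for every t ∈ [0,1), P(τ_n/n ≤ t, ν_{τ_n} = x) → 0, while P(τ_n/n ≤ 1, ν_{τ_n} = x) → p(x). -/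
open MeasureTheory Filter Set
open scoped ENNReal

namespace TauNuAux

lemma tau_le_iff {Ω : Type*} (ε : ℕ → Ω → ℕ) (hε_le : ∀ n ω, ε n ω ≤ 1)
    (n m : ℕ) (ω : Ω) :
    tauProc ε n ω ≤ m ↔ ∀ k ∈ Finset.Icc (m+1) n, ε k ω = 0 := by
  unfold tauProc
  rw [Finset.sup_le_iff]
  constructor
  · intro h k hk
    simp only [Finset.mem_Icc] at hk
    have hle := hε_le k ω
    by_contra hne
    have h1 : ε k ω = 1 := by omega
    have := h k (by simp [Finset.mem_filter, Finset.mem_Icc]; omega)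
    simp only [id] at this
    omega
  · intro h k hk
    simp only [Finset.mem_filter, Finset.mem_Icc] at hk
    simp only [id_eq]
    by_contra hgt
    have := h k (by simp only [Finset.mem_Icc]; omega)
    omega

lemma setTauLe {Ω : Type*} (ε : ℕ → Ω → ℕ) (hε_le : ∀ n ω, ε n ω ≤ 1) (n m : ℕ) :
    {ω | tauProc ε n ω ≤ m} = ⋂ k ∈ Finset.Icc (m+1) n, {ω | ε k ω = 0} := by
  ext ω
  simp only [Set.mem_setOf_eq, Set.mem_iInter, tau_le_iff ε hε_le n m ω]

lemma telescope (l : ℕ → ℝ) (hl_pos : ∀ n, 0 < l n) :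
    ∀ n m, m ≤ n → ∏ k ∈ Finset.Icc (m+1) n, (l (k-1) / l k) = l m / l n := by
  intro n
  induction n with
  | zero =>
    intro m hm
    interval_cases m
    simp [div_self (hl_pos 0).ne']
  | succ n ih =>
    intro m hm
    rcases Nat.lt_or_ge m (n+1) with h | h
    · have hmn : m ≤ n := by omega
      rw [Finset.prod_Icc_succ_top (by omega : m + 1 ≤ n + 1), ih m hmn]
      have hn1 : n + 1 - 1 = n := rfl
      rw [hn1]
      have h1 : l n ≠ 0 := (hl_pos n).ne'
      have h2 : l (n+1) ≠ 0 := (hl_pos (n+1)).ne'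
      field_simp
    · have : m = n + 1 := by omega
      subst this
      simp [div_self (hl_pos (n+1)).ne']


section Prob
set_option linter.unusedSectionVars false
variable {Ω : Type*} [MeasurableSpace Ω] (ℙ : Measure Ω) [IsProbabilityMeasure ℙ]

lemma set_zero_compl (f : Ω → ℕ) (hf : ∀ ω, f ω ≤ 1) :
    {ω | f ω = 0} = {ω | f ω = 1}ᶜ := by
  ext ω
  have := hf ω
  simp only [Set.mem_setOf_eq, Set.mem_compl_iff]
  omega

lemma prob_eps_zero (l : ℕ → ℝ) (hl_pos : ∀ n, 0 < l n) (hl_mono : Monotone l)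
    (ε : ℕ → Ω → ℕ) (hε_le : ∀ n ω, ε n ω ≤ 1) (hε_meas : ∀ n, Measurable (ε n))
    (hε_dist : ∀ n : ℕ, 1 ≤ n →
      ℙ {ω | ε n ω = 1} = ENNReal.ofReal (1 - l (n - 1) / l n))
    (k : ℕ) (hk : 1 ≤ k) :
    ℙ {ω | ε k ω = 0} = ENNReal.ofReal (l (k-1) / l k) := by
  have hr0 : 0 ≤ l (k-1) / l k := le_of_lt (div_pos (hl_pos _) (hl_pos _))
  have hr1 : l (k-1) / l k ≤ 1 := by
    rw [div_le_one (hl_pos k)]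
    exact hl_mono (Nat.sub_le k 1)
  have hms : MeasurableSet {ω | ε k ω = 1} := hε_meas k (measurableSet_singleton 1)
  rw [set_zero_compl (ε k) (hε_le k), measure_compl hms (measure_ne_top ℙ _),
    hε_dist k hk, measure_univ]
  rw [show (1 : ℝ≥0∞) = ENNReal.ofReal 1 from ENNReal.ofReal_one.symm,
    ← ENNReal.ofReal_sub _ (by linarith)]
  norm_num

lemma prob_tau_le (l : ℕ → ℝ) (hl_pos : ∀ n, 0 < l n) (hl_mono : Monotone l)
    (ε ν : ℕ → Ω → ℕ) (hε_le : ∀ n ω, ε n ω ≤ 1)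
    (hε_meas : ∀ n, Measurable (ε n))
    (hε_dist : ∀ n : ℕ, 1 ≤ n →
      ℙ {ω | ε n ω = 1} = ENNReal.ofReal (1 - l (n - 1) / l n))
    (hindep : ProbabilityTheory.iIndepFun
      (Sum.elim ε ν) ℙ)
    (n m : ℕ) (hmn : m ≤ n) :
    ℙ {ω | tauProc ε n ω ≤ m} = ENNReal.ofReal (l m / l n) := by
  classical
  set S : Finset (ℕ ⊕ ℕ) := (Finset.Icc (m+1) n).image Sum.inl with hS
  have hset : {ω | tauProc ε n ω ≤ m} = ⋂ i ∈ S, (Sum.elim ε ν i) ⁻¹' {0} := by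
    rw [setTauLe ε hε_le n m]
    ext ω
    simp only [Set.mem_iInter, hS, Finset.mem_image, Finset.mem_Icc]
    constructor
    · rintro h i ⟨k, hk, rfl⟩
      exact h k hk
    · intro h k hk
      exact h (Sum.inl k) ⟨k, hk, rfl⟩
  rw [hset, hindep.meas_biInter (fun i hi => ⟨{0}, trivial, rfl⟩)]
  rw [Finset.prod_image (fun a _ b _ h => Sum.inl_injective h)]
  have : ∀ k ∈ Finset.Icc (m+1) n,
      ℙ (Sum.elim ε ν (Sum.inl k) ⁻¹' {0}) = ENNReal.ofReal (l (k-1) / l k) := by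
    intro k hk
    simp only [Finset.mem_Icc] at hk
    have : (Sum.elim ε ν (Sum.inl k)) ⁻¹' ({0} : Set ℕ) = {ω | ε k ω = 0} := rfl
    rw [this]
    exact prob_eps_zero ℙ l hl_pos hl_mono ε hε_le hε_meas hε_dist k (by omega)
  rw [Finset.prod_congr rfl this,
    ← ENNReal.ofReal_prod_of_nonneg (fun k _ => le_of_lt (div_pos (hl_pos _) (hl_pos _))),
    telescope l hl_pos n m hmn]


lemma tau_eq_succ_set (ε : ℕ → Ω → ℕ) (n j : ℕ) :
    {ω | tauProc ε n ω = j+1}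
      = {ω | tauProc ε n ω ≤ j+1} \ {ω | tauProc ε n ω ≤ j} := by
  ext ω
  simp only [Set.mem_setOf_eq, Set.mem_diff]
  omega

lemma indep_prod (ε ν : ℕ → Ω → ℕ) (hε_le : ∀ n ω, ε n ω ≤ 1)
    (hε_meas : ∀ n, Measurable (ε n)) (hν_meas : ∀ n, Measurable (ν n))
    (hindep : ProbabilityTheory.iIndepFun
      (Sum.elim ε ν) ℙ)
    (n j x : ℕ) :
    ℙ ({ω | tauProc ε n ω = j} ∩ {ω | ν j ω = x})
      = ℙ {ω | tauProc ε n ω = j} * ℙ {ω | ν j ω = x} := by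
  classical
  have h_le : ∀ i : ℕ ⊕ ℕ,
      MeasurableSpace.comap (Sum.elim ε ν i) inferInstance ≤ ‹MeasurableSpace Ω› := by
    intro i; cases i with
    | inl k => exact (hε_meas k).comap_le
    | inr k => exact (hν_meas k).comap_le
  have hInd := ProbabilityTheory.indep_biSup_compl h_le hindep.iIndep (Set.range Sum.inl)
  have hA : ∀ M, MeasurableSet[⨆ i ∈ Set.range (Sum.inl : ℕ → ℕ ⊕ ℕ),
      MeasurableSpace.comap (Sum.elim ε ν i) inferInstance] {ω | tauProc ε n ω ≤ M} := by
    intro M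
    rw [setTauLe ε hε_le n M]
    refine MeasurableSet.biInter (Finset.Icc (M+1) n).countable_toSet (fun k hk => ?_)
    have h1 : MeasurableSet[MeasurableSpace.comap (Sum.elim ε ν (Sum.inl k)) inferInstance]
        {ω | ε k ω = 0} := ⟨{0}, trivial, rfl⟩
    exact le_biSup (fun i => MeasurableSpace.comap (Sum.elim ε ν i) inferInstance)
      (Set.mem_range_self k) _ h1
  have hAj : MeasurableSet[⨆ i ∈ Set.range (Sum.inl : ℕ → ℕ ⊕ ℕ),
      MeasurableSpace.comap (Sum.elim ε ν i) inferInstance] {ω | tauProc ε n ω = j} := by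
    cases j with
    | zero =>
      have h0 : {ω | tauProc ε n ω = 0} = {ω | tauProc ε n ω ≤ 0} := by
        ext ω; simp [Nat.le_zero]
      rw [h0]; exact hA 0
    | succ j' =>
      rw [tau_eq_succ_set]
      exact (hA (j'+1)).diff (hA j')
  have hB : MeasurableSet[⨆ i ∈ (Set.range (Sum.inl : ℕ → ℕ ⊕ ℕ))ᶜ,
      MeasurableSpace.comap (Sum.elim ε ν i) inferInstance] {ω | ν j ω = x} := by
    have h1 : MeasurableSet[MeasurableSpace.comap (Sum.elim ε ν (Sum.inr j)) inferInstance]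
        {ω | ν j ω = x} := ⟨{x}, trivial, rfl⟩
    exact le_biSup (fun i => MeasurableSpace.comap (Sum.elim ε ν i) inferInstance)
      (by simp : (Sum.inr j : ℕ ⊕ ℕ) ∈ (Set.range (Sum.inl : ℕ → ℕ ⊕ ℕ))ᶜ) _ h1
  exact (ProbabilityTheory.Indep_iff _ _ _).1 hInd _ _ hAj hB

lemma meas_tau_le (ε : ℕ → Ω → ℕ) (hε_le : ∀ n ω, ε n ω ≤ 1)
    (hε_meas : ∀ n, Measurable (ε n)) (n M : ℕ) :
    MeasurableSet {ω | tauProc ε n ω ≤ M} := by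
  rw [setTauLe ε hε_le n M]
  exact MeasurableSet.biInter (Finset.Icc (M+1) n).countable_toSet
    (fun k hk => hε_meas k (measurableSet_singleton 0))

lemma meas_tau_eq (ε : ℕ → Ω → ℕ) (hε_le : ∀ n ω, ε n ω ≤ 1)
    (hε_meas : ∀ n, Measurable (ε n)) (n j : ℕ) :
    MeasurableSet {ω | tauProc ε n ω = j} := by
  cases j with
  | zero =>
    have h0 : {ω | tauProc ε n ω = 0} = {ω | tauProc ε n ω ≤ 0} := by
      ext ω; simp [Nat.le_zero]
    rw [h0]; exact meas_tau_le ε hε_le hε_meas n 0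
  | succ j' =>
    rw [tau_eq_succ_set]
    exact (meas_tau_le ε hε_le hε_meas n (j'+1)).diff (meas_tau_le ε hε_le hε_meas n j')

lemma tau_le_union (ε : ℕ → Ω → ℕ) (n k : ℕ) :
    {ω | tauProc ε n ω ≤ k} = ⋃ j ∈ Finset.range (k+1), {ω | tauProc ε n ω = j} := by
  ext ω
  simp only [Set.mem_setOf_eq, Set.mem_iUnion, Finset.mem_range]
  constructor
  · intro h; exact ⟨tauProc ε n ω, by omega, rfl⟩
  · rintro ⟨j, hj, hje⟩; omega

lemma prob_tau_eq_sum (l : ℕ → ℝ) (hl_pos : ∀ n, 0 < l n) (hl_mono : Monotone l)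
    (ε ν : ℕ → Ω → ℕ) (hε_le : ∀ n ω, ε n ω ≤ 1)
    (hε_meas : ∀ n, Measurable (ε n))
    (hε_dist : ∀ n : ℕ, 1 ≤ n →
      ℙ {ω | ε n ω = 1} = ENNReal.ofReal (1 - l (n - 1) / l n))
    (hindep : ProbabilityTheory.iIndepFun
      (Sum.elim ε ν) ℙ)
    (n k : ℕ) (hk : k ≤ n) :
    ∑ j ∈ Finset.range (k+1), ℙ {ω | tauProc ε n ω = j} = ENNReal.ofReal (l k / l n) := by
  rw [← prob_tau_le ℙ l hl_pos hl_mono ε ν hε_le hε_meas hε_dist hindep n k hk,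
    tau_le_union ε n k, measure_biUnion_finset ?_ (fun j _ => meas_tau_eq ε hε_le hε_meas n j)]
  intro i hi j hj hij
  refine Set.disjoint_left.2 (fun ω h1 h2 => ?_)
  simp only [Set.mem_setOf_eq] at h1 h2
  exact hij (h1 ▸ h2 ▸ rfl)

lemma prob_joint_sum (ε ν : ℕ → Ω → ℕ) (hε_le : ∀ n ω, ε n ω ≤ 1)
    (hε_meas : ∀ n, Measurable (ε n)) (hν_meas : ∀ n, Measurable (ν n))
    (hindep : ProbabilityTheory.iIndepFun
      (Sum.elim ε ν) ℙ)
    (n m x : ℕ) :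
    ℙ {ω | tauProc ε n ω ≤ m ∧ ν (tauProc ε n ω) ω = x}
      = ∑ j ∈ Finset.range (m+1), ℙ {ω | tauProc ε n ω = j} * ℙ {ω | ν j ω = x} := by
  have hset : {ω | tauProc ε n ω ≤ m ∧ ν (tauProc ε n ω) ω = x}
      = ⋃ j ∈ Finset.range (m+1), ({ω | tauProc ε n ω = j} ∩ {ω | ν j ω = x}) := by
    ext ω
    simp only [Set.mem_setOf_eq, Set.mem_iUnion, Finset.mem_range, Set.mem_inter_iff]
    constructor
    · rintro ⟨h1, h2⟩
      exact ⟨tauProc ε n ω, by omega, rfl, h2⟩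
    · rintro ⟨j, hj, hje, h2⟩
      subst hje
      exact ⟨by omega, h2⟩
  have hm : ∀ j ∈ Finset.range (m+1),
      MeasurableSet ({ω | tauProc ε n ω = j} ∩ {ω | ν j ω = x}) := fun j _ =>
    (meas_tau_eq ε hε_le hε_meas n j).inter (hν_meas j (measurableSet_singleton x))
  have hd : (↑(Finset.range (m+1)) : Set ℕ).PairwiseDisjoint
      (fun j => {ω | tauProc ε n ω = j} ∩ {ω | ν j ω = x}) := by
    intro i hi j hj hij
    refine Set.disjoint_left.2 (fun ω h1 h2 => ?_)
    simp only [Set.mem_inter_iff, Set.mem_setOf_eq] at h1 h2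
    exact hij (h1.1 ▸ h2.1 ▸ rfl)
  rw [hset, measure_biUnion_finset hd hm]
  exact Finset.sum_congr rfl
    (fun j _ => indep_prod ℙ ε ν hε_le hε_meas hν_meas hindep n j x)

lemma prob_nu (qseq : ℕ → ℝ) (hq_mem : ∀ n, qseq n ∈ Icc (0:ℝ) 1)
    (ν : ℕ → Ω → ℕ) (hν_le : ∀ n ω, ν n ω ≤ 1) (hν_meas : ∀ n, Measurable (ν n))
    (hν_dist : ∀ n : ℕ, ℙ {ω | ν n ω = 1} = ENNReal.ofReal (qseq n))
    (j x : ℕ) (hx : x ≤ 1) :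
    ℙ {ω | ν j ω = x} = ENNReal.ofReal (if x = 1 then qseq j else 1 - qseq j) := by
  obtain ⟨hq0, hq1⟩ := hq_mem j
  interval_cases x
  · have hms : MeasurableSet {ω | ν j ω = 1} := hν_meas j (measurableSet_singleton 1)
    rw [set_zero_compl (ν j) (hν_le j), measure_compl hms (measure_ne_top ℙ _),
      hν_dist j, measure_univ]
    rw [show (1 : ℝ≥0∞) = ENNReal.ofReal 1 from ENNReal.ofReal_one.symm,
      ← ENNReal.ofReal_sub _ hq0]
    norm_num
  · simp [hν_dist j]

end Prob

section Analytic

lemma const_div_tendsto_zero (l : ℕ → ℝ) (hl_top : Tendsto l atTop atTop) (C : ℝ) :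
    Tendsto (fun n => C / l n) atTop (nhds 0) := by
  have h := (tendsto_inv_atTop_zero.comp hl_top).const_mul C
  simpa [div_eq_mul_inv] using h

lemma analytic_main (l : ℕ → ℝ) (hl_pos : ∀ n, 0 < l n) (hl_mono : Monotone l)
    (hl_top : Tendsto l atTop atTop)
    (w : ℕ → ℕ → ℝ) (hw0 : ∀ n j, 0 ≤ w n j)
    (hwsum : ∀ n k, k ≤ n → ∑ j ∈ Finset.range (k+1), w n j = l k / l n)
    (p : ℕ → ℝ) (hp0 : ∀ j, 0 ≤ p j) (hp1 : ∀ j, p j ≤ 1)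
    (pl : ℝ) (hpl : Tendsto p atTop (nhds pl))
    (m : ℕ → ℕ) (hm : ∀ n, m n ≤ n)
    (a : ℝ) (ha : Tendsto (fun n => l (m n) / l n) atTop (nhds a)) :
    Tendsto (fun n => ∑ j ∈ Finset.range (m n + 1), w n j * p j)
      atTop (nhds (a * pl)) := by
  have hpl0 : (0:ℝ) ≤ pl := ge_of_tendsto' hpl hp0
  have hpl1 : pl ≤ 1 := le_of_tendsto' hpl hp1
  have habs : ∀ j, |p j - pl| ≤ 1 := by
    intro j
    have h1 := hp0 j
    have h2 := hp1 j
    rw [abs_le]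
    constructor <;> linarith
  have hg : Tendsto (fun n => ∑ j ∈ Finset.range (m n + 1), w n j * (p j - pl))
      atTop (nhds 0) := by
    rw [NormedAddCommGroup.tendsto_nhds_zero]
    intro e he
    obtain ⟨J, hJ⟩ := (Metric.tendsto_atTop.1 hpl) (e/2) (by linarith)
    have hlJ : ∀ᶠ n in atTop, l J / l n < e/2 :=
      (const_div_tendsto_zero l hl_top (l J)).eventually_lt_const (by linarith)
    filter_upwards [hlJ] with n hn
    have h1 : ∑ j ∈ (Finset.range (m n + 1)).filter (fun j => j < J),
        w n j * |p j - pl| ≤ l J / l n := by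
      have hsub : (Finset.range (m n + 1)).filter (fun j => j < J)
          = Finset.range (min J (m n + 1)) := by
        ext j
        simp only [Finset.mem_filter, Finset.mem_range, Finset.mem_range]
        omega
      rw [hsub]
      have hb : ∑ j ∈ Finset.range (min J (m n + 1)), w n j * |p j - pl|
          ≤ ∑ j ∈ Finset.range (min J (m n + 1)), w n j := by
        refine Finset.sum_le_sum (fun j _ => ?_)
        have h2 := habs j
        nlinarith [hw0 n j, abs_nonneg (p j - pl)]
      refine hb.trans ?_
      rcases Nat.eq_zero_or_pos (min J (m n + 1)) with h0 | h0
      · rw [h0]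
        simp only [Finset.range_zero, Finset.sum_empty]
        exact le_of_lt (div_pos (hl_pos J) (hl_pos n))
      · obtain ⟨K, hK⟩ : ∃ K, min J (m n + 1) = K + 1 :=
          ⟨min J (m n + 1) - 1, by omega⟩
        have hK1 : K ≤ m n := by omega
        have hK2 : K ≤ J := by omega
        rw [hK, hwsum n K (le_trans hK1 (hm n))]
        exact (div_le_div_iff_of_pos_right (hl_pos n)).2 (hl_mono hK2)
    have h2 : ∑ j ∈ (Finset.range (m n + 1)).filter (fun j => ¬ j < J),
        w n j * |p j - pl| ≤ e/2 := by
      have hstep : ∑ j ∈ (Finset.range (m n + 1)).filter (fun j => ¬ j < J),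
          w n j * |p j - pl|
          ≤ ∑ j ∈ (Finset.range (m n + 1)).filter (fun j => ¬ j < J),
            w n j * (e/2) := by
        refine Finset.sum_le_sum (fun j hj => ?_)
        simp only [Finset.mem_filter, Finset.mem_range, not_lt] at hj
        have hd := hJ j hj.2
        rw [Real.dist_eq] at hd
        nlinarith [hw0 n j, abs_nonneg (p j - pl)]
      refine hstep.trans ?_
      rw [← Finset.sum_mul]
      have hsum_le : ∑ j ∈ (Finset.range (m n + 1)).filter (fun j => ¬ j < J), w n j
          ≤ ∑ j ∈ Finset.range (m n + 1), w n j :=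
        Finset.sum_le_sum_of_subset_of_nonneg (Finset.filter_subset _ _)
          (fun j _ _ => hw0 n j)
      have hle1 : ∑ j ∈ Finset.range (m n + 1), w n j ≤ 1 := by
        rw [hwsum n (m n) (hm n), div_le_one (hl_pos n)]
        exact hl_mono (hm n)
      have hsum_nonneg : (0:ℝ) ≤ ∑ j ∈ (Finset.range (m n + 1)).filter
          (fun j => ¬ j < J), w n j :=
        Finset.sum_nonneg (fun j _ => hw0 n j)
      nlinarith
    calc ‖∑ j ∈ Finset.range (m n + 1), w n j * (p j - pl)‖
        ≤ ∑ j ∈ Finset.range (m n + 1), ‖w n j * (p j - pl)‖ := norm_sum_le _ _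
      _ = ∑ j ∈ Finset.range (m n + 1), w n j * |p j - pl| := by
          refine Finset.sum_congr rfl (fun j _ => ?_)
          rw [Real.norm_eq_abs, abs_mul, abs_of_nonneg (hw0 n j)]
      _ = (∑ j ∈ (Finset.range (m n + 1)).filter (fun j => j < J),
            w n j * |p j - pl|)
          + ∑ j ∈ (Finset.range (m n + 1)).filter (fun j => ¬ j < J),
            w n j * |p j - pl| :=
          (Finset.sum_filter_add_sum_filter_not _ _ _).symm
      _ ≤ l J / l n + e/2 := add_le_add h1 h2
      _ < e := by linarith
  have heq : (fun n => ∑ j ∈ Finset.range (m n + 1), w n j * p j)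
      = fun n => (∑ j ∈ Finset.range (m n + 1), w n j * (p j - pl))
          + pl * (l (m n) / l n) := by
    funext n
    rw [← hwsum n (m n) (hm n), Finset.mul_sum, ← Finset.sum_add_distrib]
    exact Finset.sum_congr rfl (fun j _ => by ring)
  rw [heq]
  have h3 := hg.add (ha.const_mul pl)
  rw [zero_add] at h3
  rw [mul_comm]
  exact h3

lemma ratio_floor (l : ℕ → ℝ) (hl_pos : ∀ n, 0 < l n)
    (L : ℝ → ℝ) (hmono : MonotoneOn L (Ici (0:ℝ))) (hLl : ∀ n : ℕ, L n = l n)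
    (t : ℝ) (ht : 0 < t) (A : ℝ)
    (hup : Tendsto (fun n : ℕ => L ((n:ℝ) * t) / L n) atTop (nhds A))
    (hlow : ∀ b, b < A → ∃ u : ℝ, 0 < u ∧ u < t ∧
      ∀ᶠ n : ℕ in atTop, b < L ((n:ℝ) * u) / L n) :
    Tendsto (fun n : ℕ => l (Nat.floor ((n:ℝ) * t)) / l n) atTop (nhds A) := by
  have hLn : ∀ n : ℕ, 0 < L n := fun n => hLl n ▸ hl_pos n
  rw [tendsto_order]
  constructor
  · intro b hb
    obtain ⟨u, hu0, hut, hev⟩ := hlow b hb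
    have hN : ∀ᶠ n : ℕ in atTop, 1 ≤ (n:ℝ) * (t - u) :=
      (tendsto_natCast_atTop_atTop.atTop_mul_const (by linarith)).eventually_ge_atTop 1
    filter_upwards [hev, hN] with n h1 h2
    have hfl : (n:ℝ) * u ≤ ((Nat.floor ((n:ℝ) * t) : ℕ) : ℝ) := by
      have h3 : (n:ℝ) * t - 1 < ((Nat.floor ((n:ℝ) * t) : ℕ) : ℝ) := Nat.sub_one_lt_floor _
      nlinarith
    have hL2 : L ((n:ℝ) * u) ≤ L ((Nat.floor ((n:ℝ) * t) : ℕ) : ℝ) :=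
      hmono (Set.mem_Ici.2 (mul_nonneg (Nat.cast_nonneg n) hu0.le))
        (Set.mem_Ici.2 (Nat.cast_nonneg _)) hfl
    have h4 : b < L ((Nat.floor ((n:ℝ)*t) : ℕ) : ℝ) / L n :=
      lt_of_lt_of_le h1 ((div_le_div_iff_of_pos_right (hLn n)).2 hL2)
    rwa [hLl, hLl] at h4
  · intro b hb
    filter_upwards [hup.eventually_lt_const hb] with n h1
    have hfl : ((Nat.floor ((n:ℝ)*t) : ℕ) : ℝ) ≤ (n:ℝ) * t :=
      Nat.floor_le (mul_nonneg (Nat.cast_nonneg n) ht.le)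
    have hL2 : L ((Nat.floor ((n:ℝ)*t) : ℕ) : ℝ) ≤ L ((n:ℝ)*t) :=
      hmono (Set.mem_Ici.2 (Nat.cast_nonneg _))
        (Set.mem_Ici.2 (mul_nonneg (Nat.cast_nonneg n) ht.le)) hfl
    have h4 : l (Nat.floor ((n:ℝ)*t)) / l n ≤ L ((n:ℝ)*t) / L n := by
      rw [← hLl, ← hLl]
      exact (div_le_div_iff_of_pos_right (hLn n)).2 hL2
    exact lt_of_le_of_lt h4 h1

lemma tendsto_l_atTop (l : ℕ → ℝ) (hl_pos : ∀ n, 0 < l n) (hl_mono : Monotone l)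
    (L : ℝ → ℝ) (hmono : MonotoneOn L (Ici (0:ℝ))) (hLl : ∀ n : ℕ, L n = l n)
    (s : ℝ) (hs : 1 < s) (hev : ∀ᶠ r : ℝ in atTop, s ≤ L (r * 2) / L r) :
    Tendsto l atTop atTop := by
  obtain ⟨T, hT⟩ := eventually_atTop.1 hev
  set N : ℕ := max 1 (Nat.ceil T) with hN
  have hNT : T ≤ (N:ℝ) := le_trans (Nat.le_ceil T)
    (Nat.cast_le.2 (le_max_right _ _))
  have key : ∀ k : ℕ, s ^ k * l N ≤ l (2^k * N) := by
    intro k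
    induction k with
    | zero => simp
    | succ k ih =>
      have hrN : ((N:ℕ):ℝ) ≤ ((2^k * N : ℕ) : ℝ) :=
        Nat.cast_le.2 (Nat.le_mul_of_pos_left N (Nat.two_pow_pos k))
      have hstep := hT ((2^k * N : ℕ) : ℝ) (le_trans hNT hrN)
      have hLpos : 0 < L ((2^k*N : ℕ) : ℝ) := hLl _ ▸ hl_pos _
      have hmul : s * L ((2^k*N : ℕ) : ℝ) ≤ L (((2^k*N : ℕ) : ℝ) * 2) :=
        (le_div_iff₀ hLpos).1 hstep
      have hcast : ((2^k*N : ℕ) : ℝ) * 2 = ((2^(k+1)*N : ℕ) : ℝ) := by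
        push_cast
        ring
      rw [hcast, hLl, hLl] at hmul
      have hs0 : (0:ℝ) < s := by linarith
      calc s ^ (k+1) * l N = s * (s^k * l N) := by ring
        _ ≤ s * l (2^k * N) := by nlinarith
        _ ≤ l (2^(k+1) * N) := hmul
  refine tendsto_atTop_atTop_of_monotone hl_mono ?_
  intro b
  obtain ⟨k, hk⟩ :=
    ((tendsto_pow_atTop_atTop_of_one_lt hs).eventually_ge_atTop (b / l N)).exists
  refine ⟨2^k * N, ?_⟩
  have hlN := hl_pos N
  calc b = (b / l N) * l N := by field_simp
    _ ≤ s^k * l N := mul_le_mul_of_nonneg_right hk hlN.le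
    _ ≤ l (2^k * N) := key k

end Analytic

section Master
set_option linter.unusedSectionVars false
variable {Ω : Type*} [MeasurableSpace Ω] (ℙ : Measure Ω) [IsProbabilityMeasure ℙ]

lemma master (l : ℕ → ℝ) (hl_pos : ∀ n, 0 < l n) (hl_mono : Monotone l)
    (qseq : ℕ → ℝ) (hq_mem : ∀ n, qseq n ∈ Icc (0:ℝ) 1)
    (ε ν : ℕ → Ω → ℕ)
    (hε_le : ∀ n ω, ε n ω ≤ 1) (hν_le : ∀ n ω, ν n ω ≤ 1)
    (hε_meas : ∀ n, Measurable (ε n)) (hν_meas : ∀ n, Measurable (ν n))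
    (hε_dist : ∀ n : ℕ, 1 ≤ n →
      ℙ {ω | ε n ω = 1} = ENNReal.ofReal (1 - l (n - 1) / l n))
    (hν_dist : ∀ n : ℕ, ℙ {ω | ν n ω = 1} = ENNReal.ofReal (qseq n))
    (hindep : ProbabilityTheory.iIndepFun
      (Sum.elim ε ν) ℙ)
    (q : ℝ) (hq_lim : Tendsto qseq atTop (nhds q))
    (px : ℕ → ℝ) (hpx : ∀ x : ℕ, x ≤ 1 → px x = if x = 1 then q else 1 - q)
    (x : ℕ) (hx : x ≤ 1)
    (hl_top : Tendsto l atTop atTop)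
    (m : ℕ → ℕ) (hm : ∀ n, m n ≤ n)
    (a : ℝ) (ha : Tendsto (fun n => l (m n) / l n) atTop (nhds a)) :
    Tendsto (fun n => (ℙ {ω | tauProc ε n ω ≤ m n ∧ ν (tauProc ε n ω) ω = x}).toReal)
      atTop (nhds (a * px x)) := by
  set w : ℕ → ℕ → ℝ := fun n j => (ℙ {ω | tauProc ε n ω = j}).toReal with hw
  set p : ℕ → ℝ := fun j => (ℙ {ω | ν j ω = x}).toReal with hp
  have hfun : ∀ n, (ℙ {ω | tauProc ε n ω ≤ m n ∧ ν (tauProc ε n ω) ω = x}).toReal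
      = ∑ j ∈ Finset.range (m n + 1), w n j * p j := by
    intro n
    rw [prob_joint_sum ℙ ε ν hε_le hε_meas hν_meas hindep n (m n) x,
      ENNReal.toReal_sum (fun j _ =>
        ENNReal.mul_ne_top (measure_ne_top ℙ _) (measure_ne_top ℙ _))]
    exact Finset.sum_congr rfl (fun j _ => ENNReal.toReal_mul)
  have hwsum : ∀ n k, k ≤ n → ∑ j ∈ Finset.range (k+1), w n j = l k / l n := by
    intro n k hk
    have h1 := prob_tau_eq_sum ℙ l hl_pos hl_mono ε ν hε_le hε_meas hε_dist hindep n k hk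
    have h2 : (∑ j ∈ Finset.range (k+1), ℙ {ω | tauProc ε n ω = j}).toReal
        = (ENNReal.ofReal (l k / l n)).toReal := by rw [h1]
    rw [ENNReal.toReal_sum (fun j _ => measure_ne_top ℙ _),
      ENNReal.toReal_ofReal (le_of_lt (div_pos (hl_pos k) (hl_pos n)))] at h2
    exact h2
  have hpval : ∀ j, p j = if x = 1 then qseq j else 1 - qseq j := by
    intro j
    obtain ⟨h0, h1⟩ := hq_mem j
    rw [hp]
    simp only
    rw [prob_nu ℙ qseq hq_mem ν hν_le hν_meas hν_dist j x hx,
      ENNReal.toReal_ofReal (by split_ifs <;> linarith)]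
  have hp0 : ∀ j, 0 ≤ p j := by
    intro j
    obtain ⟨h0, h1⟩ := hq_mem j
    rw [hpval j]
    split_ifs <;> linarith
  have hp1 : ∀ j, p j ≤ 1 := by
    intro j
    obtain ⟨h0, h1⟩ := hq_mem j
    rw [hpval j]
    split_ifs <;> linarith
  have hplim : Tendsto p atTop (nhds (px x)) := by
    rw [hpx x hx]
    have hfe : p = fun j => if x = 1 then qseq j else 1 - qseq j := funext hpval
    rw [hfe]
    split_ifs with h
    · exact hq_lim
    · exact tendsto_const_nhds.sub hq_lim
  have hmain := analytic_main l hl_pos hl_mono hl_top w (fun n j => ENNReal.toReal_nonneg)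
    hwsum p hp0 hp1 (px x) hplim m hm a ha
  exact Tendsto.congr (fun n => (hfun n).symm) hmain


end Master


lemma floor_mul_le (n : ℕ) (t : ℝ) (ht0 : 0 ≤ t) (ht1 : t ≤ 1) :
    Nat.floor ((n:ℝ)*t) ≤ n := by
  have h1 : (n:ℝ)*t ≤ (n:ℝ) := by nlinarith [Nat.cast_nonneg (α := ℝ) n]
  calc Nat.floor ((n:ℝ)*t) ≤ Nat.floor ((n:ℝ)) := Nat.floor_le_floor h1
    _ = n := Nat.floor_natCast n

lemma event_eq {Ω : Type*} (ε ν : ℕ → Ω → ℕ) (x : ℕ) (t : ℝ) (ht : 0 ≤ t)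
    (n : ℕ) (hn : 1 ≤ n) :
    {ω | (tauProc ε n ω : ℝ) / n ≤ t ∧ ν (tauProc ε n ω) ω = x}
      = {ω | tauProc ε n ω ≤ Nat.floor ((n:ℝ)*t) ∧ ν (tauProc ε n ω) ω = x} := by
  ext ω
  have hn0 : (0:ℝ) < n := by exact_mod_cast hn
  simp only [Set.mem_setOf_eq]
  constructor
  · rintro ⟨h1, h2⟩
    refine ⟨?_, h2⟩
    rw [div_le_iff₀ hn0] at h1
    rw [Nat.le_floor_iff (mul_nonneg hn0.le ht)]
    nlinarith
  · rintro ⟨h1, h2⟩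
    refine ⟨?_, h2⟩
    rw [Nat.le_floor_iff (mul_nonneg hn0.le ht)] at h1
    rw [div_le_iff₀ hn0]
    nlinarith

end TauNuAux

/-- **Asymptotic independence of `τ_n/n` and `ν_{τ_n}`.** With `p(x) = q^x (1-q)^{1-x}`:
(i) if `l_n` is regularly varying with index `c ∈ (0,∞)`, then
`P(τ_n/n ≤ t, ν_{τ_n} = x) → t^c p(x)` for `t ∈ [0,1]`; (ii) if `l_n` is slowly varying
and `l_n → ∞`, the limit is `p(x)` for `t ∈ (0,1]`; (iii) in the fast increments case the
limit is `0` for `t ∈ [0,1)` and `p(x)` for `t = 1`. -/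
theorem tau_nu_asymptotically_independent
    {Ω : Type*} [MeasurableSpace Ω] (ℙ : Measure Ω) [IsProbabilityMeasure ℙ]
    (l : ℕ → ℝ) (hl_pos : ∀ n, 0 < l n) (hl_mono : Monotone l)
    (qseq : ℕ → ℝ) (hq_mem : ∀ n, qseq n ∈ Icc (0:ℝ) 1)
    (ε ν : ℕ → Ω → ℕ)
    (hε_le : ∀ n ω, ε n ω ≤ 1) (hν_le : ∀ n ω, ν n ω ≤ 1)
    (hε_meas : ∀ n, Measurable (ε n)) (hν_meas : ∀ n, Measurable (ν n))
    (hε_dist : ∀ n : ℕ, 1 ≤ n →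
      ℙ {ω | ε n ω = 1} = ENNReal.ofReal (1 - l (n - 1) / l n))
    (hν_dist : ∀ n : ℕ, ℙ {ω | ν n ω = 1} = ENNReal.ofReal (qseq n))
    (hindep : ProbabilityTheory.iIndepFun
      (Sum.elim ε ν) ℙ)
    (q : ℝ) (hq_lim : Tendsto qseq atTop (nhds q))
    (px : ℕ → ℝ) (hpx : ∀ x : ℕ, x ≤ 1 → px x = if x = 1 then q else 1 - q) :
    ∀ x : ℕ, x ≤ 1 →
      -- (i) regularly varying case, `0 < c < ∞`
      ((∀ c : ℝ, 0 < c →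
        ∀ L : ℝ → ℝ, (∀ y : ℝ, 0 ≤ y → 0 ≤ L y) → StrictMonoOn L (Ici (0:ℝ)) →
          (∀ n : ℕ, L n = l n) →
          (∀ y : ℝ, 0 < y →
            Tendsto (fun t : ℝ => L (t * y) / L t) atTop (nhds (y ^ c))) →
          ∀ t : ℝ, t ∈ Icc (0:ℝ) 1 →
            Tendsto (fun n : ℕ =>
                (ℙ {ω | (tauProc ε n ω : ℝ) / n ≤ t ∧ ν (tauProc ε n ω) ω = x}).toReal)
              atTop (nhds (t ^ c * px x))) ∧
      -- (ii) slowly varying case, `c = 0`, with `l_n → ∞`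
      ((Tendsto l atTop atTop →
        (∃ L : ℝ → ℝ, (∀ y : ℝ, 0 ≤ y → 0 ≤ L y) ∧ MonotoneOn L (Ici (0:ℝ)) ∧
          (∀ n : ℕ, L n = l n) ∧
          (∀ y : ℝ, 0 < y → Tendsto (fun t : ℝ => L (t * y) / L t) atTop (nhds 1))) →
        ∀ t : ℝ, 0 < t → t ≤ 1 →
          Tendsto (fun n : ℕ =>
              (ℙ {ω | (tauProc ε n ω : ℝ) / n ≤ t ∧ ν (tauProc ε n ω) ω = x}).toReal)
            atTop (nhds (px x)))) ∧
      -- (iii) fast increments case, `c = ∞`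
      ((∃ L : ℝ → ℝ, (∀ y : ℝ, 0 ≤ y → 0 ≤ L y) ∧ MonotoneOn L (Ici (0:ℝ)) ∧
          (∀ n : ℕ, L n = l n) ∧
          (∀ y : ℝ, 0 < y → y < 1 →
            Tendsto (fun t : ℝ => L (t * y) / L t) atTop (nhds 0)) ∧
          (∀ y : ℝ, 1 < y →
            Tendsto (fun t : ℝ => L (t * y) / L t) atTop atTop)) →
        (∀ t : ℝ, 0 ≤ t → t < 1 →
          Tendsto (fun n : ℕ =>
              (ℙ {ω | (tauProc ε n ω : ℝ) / n ≤ t ∧ ν (tauProc ε n ω) ω = x}).toReal)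
            atTop (nhds 0)) ∧
        Tendsto (fun n : ℕ =>
            (ℙ {ω | (tauProc ε n ω : ℝ) / n ≤ 1 ∧ ν (tauProc ε n ω) ω = x}).toReal)
          atTop (nhds (px x)))) := by

  intro x hx
  refine ⟨?_, ?_, ?_⟩
  · -- case (i): regularly varying, 0 < c < ∞
    intro c hc L hL0 hLsm hLl hvar t ht
    obtain ⟨ht0, ht1⟩ := ht
    have hmono : MonotoneOn L (Ici (0:ℝ)) := hLsm.monotoneOn
    have h2c : 1 < (2:ℝ) ^ c :=
      (Real.one_lt_rpow_iff_of_pos (by norm_num)).2 (Or.inl ⟨one_lt_two, hc⟩)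
    have hev : ∀ᶠ r : ℝ in atTop, (1 + (2:ℝ)^c)/2 ≤ L (r*2)/L r :=
      ((hvar 2 (by norm_num)).eventually_const_lt
        (show (1 + (2:ℝ)^c)/2 < 2^c by linarith)).mono (fun r hr => hr.le)
    have hl_top := TauNuAux.tendsto_l_atTop l hl_pos hl_mono L hmono hLl _
      (by linarith) hev
    have ha : Tendsto (fun n : ℕ => l (Nat.floor ((n:ℝ)*t)) / l n)
        atTop (nhds (t ^ c)) := by
      rcases eq_or_lt_of_le ht0 with h0 | h0
      · subst h0
        rw [Real.zero_rpow (ne_of_gt hc)]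
        refine Tendsto.congr (fun n => ?_)
          (TauNuAux.const_div_tendsto_zero l hl_top (l 0))
        rw [mul_zero, Nat.floor_zero]
      · refine TauNuAux.ratio_floor l hl_pos L hmono hLl t h0 (t^c)
          ((hvar t h0).comp tendsto_natCast_atTop_atTop) (fun b hb => ?_)
        have hcont : ContinuousAt (fun u : ℝ => u ^ c) t :=
          Real.continuousAt_rpow_const t c (Or.inl (ne_of_gt h0))
        have hsub : Tendsto (fun δ : ℝ => t - δ) (nhds 0) (nhds (t - 0)) :=
          tendsto_const_nhds.sub tendsto_id
        rw [sub_zero] at hsub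
        have htend : Tendsto (fun δ : ℝ => (t - δ) ^ c)
            (nhdsWithin (0:ℝ) (Ioi 0)) (nhds (t ^ c)) :=
          hcont.tendsto.comp (hsub.mono_left nhdsWithin_le_nhds)
        have hev2 : ∀ᶠ δ in nhdsWithin (0:ℝ) (Ioi 0), b < (t - δ)^c :=
          htend.eventually_const_lt hb
        have hev3 : ∀ᶠ δ in nhds (0:ℝ), δ < t := gt_mem_nhds h0
        obtain ⟨δ, hδb, hδt, hδ0⟩ :=
          (hev2.and ((hev3.filter_mono nhdsWithin_le_nhds).and
            self_mem_nhdsWithin)).exists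
        have hδ0' : (0:ℝ) < δ := hδ0
        refine ⟨t - δ, by linarith, by linarith, ?_⟩
        exact ((hvar (t - δ) (by linarith)).comp
          tendsto_natCast_atTop_atTop).eventually_const_lt hδb
    have hmaster := TauNuAux.master ℙ l hl_pos hl_mono qseq hq_mem ε ν hε_le hν_le
      hε_meas hν_meas hε_dist hν_dist hindep q hq_lim px hpx x hx hl_top
      (fun n => Nat.floor ((n:ℝ)*t)) (fun n => TauNuAux.floor_mul_le n t ht0 ht1)
      (t^c) ha
    refine Filter.Tendsto.congr' ?_ hmaster
    filter_upwards [eventually_ge_atTop 1] with n hn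
    rw [TauNuAux.event_eq ε ν x t ht0 n hn]
  · -- case (ii): slowly varying, c = 0
    intro hl_top hL t ht0 ht1
    obtain ⟨L, hL0, hmono, hLl, hvar⟩ := hL
    have ha : Tendsto (fun n : ℕ => l (Nat.floor ((n:ℝ)*t)) / l n)
        atTop (nhds 1) := by
      refine TauNuAux.ratio_floor l hl_pos L hmono hLl t ht0 1
        ((hvar t ht0).comp tendsto_natCast_atTop_atTop) (fun b hb => ?_)
      exact ⟨t/2, half_pos ht0, half_lt_self ht0,
        ((hvar (t/2) (half_pos ht0)).comp
          tendsto_natCast_atTop_atTop).eventually_const_lt hb⟩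
    have hmaster := TauNuAux.master ℙ l hl_pos hl_mono qseq hq_mem ε ν hε_le hν_le
      hε_meas hν_meas hε_dist hν_dist hindep q hq_lim px hpx x hx hl_top
      (fun n => Nat.floor ((n:ℝ)*t)) (fun n => TauNuAux.floor_mul_le n t ht0.le ht1)
      1 ha
    rw [one_mul] at hmaster
    refine Filter.Tendsto.congr' ?_ hmaster
    filter_upwards [eventually_ge_atTop 1] with n hn
    rw [TauNuAux.event_eq ε ν x t ht0.le n hn]
  · -- case (iii): fast increments, c = ∞
    rintro ⟨L, hL0, hmono, hLl, hvar0, hvarinf⟩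
    have hev : ∀ᶠ r : ℝ in atTop, (2:ℝ) ≤ L (r*2)/L r :=
      (hvarinf 2 one_lt_two).eventually_ge_atTop 2
    have hl_top := TauNuAux.tendsto_l_atTop l hl_pos hl_mono L hmono hLl 2
      one_lt_two hev
    constructor
    · intro t ht0 ht1
      have ha : Tendsto (fun n : ℕ => l (Nat.floor ((n:ℝ)*t)) / l n)
          atTop (nhds 0) := by
        rcases eq_or_lt_of_le ht0 with h0 | h0
        · subst h0
          refine Tendsto.congr (fun n => ?_)
            (TauNuAux.const_div_tendsto_zero l hl_top (l 0))
          rw [mul_zero, Nat.floor_zero]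
        · have hLn : ∀ n : ℕ, 0 < L n := fun n => hLl n ▸ hl_pos n
          refine squeeze_zero (fun n => le_of_lt (div_pos (hl_pos _) (hl_pos _)))
            (fun n => ?_) ((hvar0 t h0 ht1).comp tendsto_natCast_atTop_atTop)
          have hfl : ((Nat.floor ((n:ℝ)*t) : ℕ) : ℝ) ≤ (n:ℝ) * t :=
            Nat.floor_le (mul_nonneg (Nat.cast_nonneg n) h0.le)
          have hL2 : L ((Nat.floor ((n:ℝ)*t) : ℕ) : ℝ) ≤ L ((n:ℝ)*t) :=
            hmono (Set.mem_Ici.2 (Nat.cast_nonneg _))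
              (Set.mem_Ici.2 (mul_nonneg (Nat.cast_nonneg n) h0.le)) hfl
          rw [← hLl (Nat.floor ((n:ℝ)*t)), ← hLl n]
          exact (div_le_div_iff_of_pos_right (hLn n)).2 hL2
      have hmaster := TauNuAux.master ℙ l hl_pos hl_mono qseq hq_mem ε ν hε_le hν_le
        hε_meas hν_meas hε_dist hν_dist hindep q hq_lim px hpx x hx hl_top
        (fun n => Nat.floor ((n:ℝ)*t)) (fun n => TauNuAux.floor_mul_le n t ht0 ht1.le)
        0 ha
      rw [zero_mul] at hmaster
      refine Filter.Tendsto.congr' ?_ hmaster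
      filter_upwards [eventually_ge_atTop 1] with n hn
      rw [TauNuAux.event_eq ε ν x t ht0 n hn]
    · have ha : Tendsto (fun n : ℕ => l (Nat.floor ((n:ℝ)*1)) / l n)
          atTop (nhds 1) := by
        refine Tendsto.congr (fun n => ?_) tendsto_const_nhds
        rw [mul_one, Nat.floor_natCast, div_self (hl_pos n).ne']
      have hmaster := TauNuAux.master ℙ l hl_pos hl_mono qseq hq_mem ε ν hε_le hν_le
        hε_meas hν_meas hε_dist hν_dist hindep q hq_lim px hpx x hx hl_top
        (fun n => Nat.floor ((n:ℝ)*1))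
        (fun n => TauNuAux.floor_mul_le n 1 zero_le_one le_rfl) 1 ha
      rw [one_mul] at hmaster
      refine Filter.Tendsto.congr' ?_ hmaster
      filter_upwards [eventually_ge_atTop 1] with n hn
      rw [TauNuAux.event_eq ε ν x 1 zero_le_one n hn]
end

section
/- Assume there exists a nondecreasing function L : [0,∞) → [0,∞) with L(n) = l_n for all n ∈ ℕ such that, as t → ∞, L(tx)/L(t) → 0 for every 0 < x < 1 and L(tx)/L(t) → ∞ for every x > 1 (fast increments, c = ∞); assume q_n → q ∈ [0,1]; and assume there exists p̄ ∈ [0,1] such that s_n/n → p̄ in probability. Then the empirical measures g_n converge weakly on [0,1] to the Dirac mass δ_{1−q} as n → ∞. -/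
open MeasureTheory Filter Set
open scoped ENNReal

/-- `s_n = Σ_{k=1}^n Y_{k, x_{k-1}+1}`. -/
def sProc {Ω : Type*} (Y : ℕ → ℕ → Ω → ℕ) (ν ε : ℕ → Ω → ℕ) (n : ℕ) (ω : Ω) : ℕ :=
  ∑ k ∈ Finset.Icc 1 n, Y k (xProc Y ν ε (k - 1) ω + 1) ω

/-- The empirical measure `g_n = (1/n) Σ_{k=1}^n δ_{α_{n,k}}`. -/
noncomputable def empiricalMeasure (α : ℕ → ℕ → ℝ) (n : ℕ) : Measure ℝ :=
  ((n : ℝ≥0∞))⁻¹ • ∑ k ∈ Finset.Icc 1 n, Measure.dirac (α n k)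

set_option maxHeartbeats 2000000 in
/-- **Weak convergence of the empirical distributions, fast increments case (`c = ∞`).**
If `l_n` has fast increments, `q_n → q` and `s_n/n → p̄` in probability, then
`g_n → δ_{1-q}` weakly on `[0,1]`. -/
theorem empirical_weak_limit_fast_increments
    {Ω : Type*} [MeasurableSpace Ω] (ℙ : Measure Ω) [IsProbabilityMeasure ℙ]
    (p : ℕ → ℕ → ℝ) (hp : ∀ n k, p n k ∈ Icc (0:ℝ) 1)
    (a : ℕ → ℕ → ℝ)
    (ha_anti : Antitone fun n => a n 0)
    (ha_mono : Monotone fun n => a n (n + 1))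
    (ha_pos : a 0 0 < a 0 1)
    (harec : ∀ n : ℕ, 1 ≤ n → ∀ k : ℕ, 1 ≤ k → k ≤ n →
      a n k = p n k * a (n - 1) (k - 1) + (1 - p n k) * a (n - 1) k)
    (l : ℕ → ℝ) (hl : ∀ n, l n = a n (n + 1) - a n 0)
    (qseq : ℕ → ℝ) (hq_mem : ∀ n, qseq n ∈ Icc (0:ℝ) 1)
    (hq_def : ∀ n : ℕ, 1 ≤ n → l (n - 1) < l n →
      qseq n = (a n (n + 1) - a (n - 1) n) / (l n - l (n - 1)))
    (Y : ℕ → ℕ → Ω → ℕ) (ν ε : ℕ → Ω → ℕ)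
    (hY_le : ∀ n k ω, Y n k ω ≤ 1) (hν_le : ∀ n ω, ν n ω ≤ 1) (hε_le : ∀ n ω, ε n ω ≤ 1)
    (hY_meas : ∀ n k, Measurable (Y n k)) (hν_meas : ∀ n, Measurable (ν n))
    (hε_meas : ∀ n, Measurable (ε n))
    (hY_dist : ∀ n k, ℙ {ω | Y n k ω = 1} = ENNReal.ofReal (p n k))
    (hν_dist : ∀ n, ℙ {ω | ν n ω = 1} = ENNReal.ofReal (qseq n))
    (hε_dist : ∀ n : ℕ, 1 ≤ n →
      ℙ {ω | ε n ω = 1} = ENNReal.ofReal (1 - l (n - 1) / l n))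
    (hindep : ProbabilityTheory.iIndepFun
      (m := fun _ : (ℕ × ℕ) ⊕ ℕ ⊕ ℕ => (inferInstance : MeasurableSpace ℕ))
      (Sum.elim (fun nk : ℕ × ℕ => Y nk.1 nk.2) (Sum.elim ν ε)) ℙ)
    (L : ℝ → ℝ) (hL_nonneg : ∀ x : ℝ, 0 ≤ x → 0 ≤ L x)
    (hL_mono : MonotoneOn L (Ici (0:ℝ)))
    (hL_interp : ∀ n : ℕ, L n = l n)
    (hL_fast_lt : ∀ x : ℝ, 0 < x → x < 1 →
      Tendsto (fun t : ℝ => L (t * x) / L t) atTop (nhds 0))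
    (hL_fast_gt : ∀ x : ℝ, 1 < x →
      Tendsto (fun t : ℝ => L (t * x) / L t) atTop atTop)
    (q : ℝ) (hq_lim : Tendsto qseq atTop (nhds q))
    (pbar : ℝ) (hpbar : pbar ∈ Icc (0:ℝ) 1)
    (hs : TendstoInMeasure ℙ (fun (n : ℕ) (ω : Ω) => (sProc Y ν ε n ω : ℝ) / n) atTop
      (fun _ => pbar))
    (α : ℕ → ℕ → ℝ) (hα : ∀ n k, α n k = (a n k - a n 0) / l n) :
    ∀ f : BoundedContinuousFunction ℝ ℝ,
      Tendsto (fun n : ℕ => ∫ x, f x ∂(empiricalMeasure α n)) atTop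
        (nhds (∫ x, f x ∂(Measure.dirac (1 - q)))) := by
  intro f
  -- ## Basic facts about `l`
  have hl0 : 0 < l 0 := by rw [hl 0]; linarith
  have hlstep : ∀ n, l n ≤ l (n+1) := by
    intro n
    have h1 : a (n+1) 0 ≤ a n 0 := ha_anti (Nat.le_succ n)
    have h2 : a n (n+1) ≤ a (n+1) (n+1+1) := ha_mono (Nat.le_succ n)
    rw [hl n, hl (n+1)]; linarith
  have hlmono : Monotone l := monotone_nat_of_le_succ hlstep
  have hlpos : ∀ n, 0 < l n := fun n => lt_of_lt_of_le hl0 (hlmono (Nat.zero_le n))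
  -- ## Monotonicity of break points in k
  have hmonok : ∀ n k, k ≤ n → a n k ≤ a n (k+1) := by
    intro n
    induction n with
    | zero =>
      intro k hk
      interval_cases k
      exact le_of_lt ha_pos
    | succ n ih =>
      intro k hk
      match k, hk with
      | 0, _ =>
        have h1 : a (n+1) 0 ≤ a n 0 := ha_anti (Nat.le_succ n)
        have hr := harec (n+1) (by omega) 1 le_rfl (by omega)
        rw [show (n+1) - 1 = n by omega, show (1:ℕ) - 1 = 0 by omega] at hr
        have hp1 := hp (n+1) 1
        have h0 : a n 0 ≤ a n 1 := ih 0 (Nat.zero_le n)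
        obtain ⟨hpa, hpb⟩ := hp1
        nlinarith
      | (j+1), hk =>
        rcases Nat.lt_or_ge (j+1) (n+1) with hlt | hge
        · have hr1 := harec (n+1) (by omega) (j+1) (by omega) (by omega)
          have hr2 := harec (n+1) (by omega) (j+2) (by omega) (by omega)
          rw [show (n+1) - 1 = n by omega, show (j+1) - 1 = j by omega] at hr1
          rw [show (n+1) - 1 = n by omega, show (j+2) - 1 = j+1 by omega] at hr2
          have hm1 : a n j ≤ a n (j+1) := ih j (by omega)
          have hm2 : a n (j+1) ≤ a n (j+2) := ih (j+1) (by omega)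
          obtain ⟨hp1a, hp1b⟩ := hp (n+1) (j+1)
          obtain ⟨hp2a, hp2b⟩ := hp (n+1) (j+2)
          nlinarith
        · have hjn : j = n := by omega
          subst hjn
          have hr := harec (j+1) (by omega) (j+1) (by omega) le_rfl
          rw [show (j+1) - 1 = j by omega] at hr
          have hm : a j j ≤ a j (j+1) := ih j le_rfl
          have h2 : a j (j+1) ≤ a (j+1) (j+1+1) := ha_mono (Nat.le_succ j)
          obtain ⟨hpa, hpb⟩ := hp (j+1) (j+1)
          nlinarith
  have hmonok' : ∀ n i k, i ≤ k → k ≤ n + 1 → a n i ≤ a n k := by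
    intro n i k hik hkn
    obtain ⟨d, rfl⟩ := Nat.exists_eq_add_of_le hik
    clear hik
    induction d with
    | zero => exact le_rfl
    | succ d ih =>
      have h2 : a n i ≤ a n (i + d) := ih (by omega)
      have h1 : a n (i+d) ≤ a n (i+d+1) := hmonok n (i+d) (by omega)
      exact le_trans h2 h1
  -- ## One-step comparisons
  have hup : ∀ n k, k ≤ n + 1 → a (n+1) k ≤ a n k := by
    intro n k hk
    match k, hk with
    | 0, _ => exact ha_anti (Nat.le_succ n)
    | (j+1), hk =>
      have hr := harec (n+1) (by omega) (j+1) (by omega) (by omega)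
      rw [show (n+1) - 1 = n by omega, show (j+1) - 1 = j by omega] at hr
      have hm : a n j ≤ a n (j+1) := hmonok n j (by omega)
      obtain ⟨hpa, hpb⟩ := hp (n+1) (j+1)
      nlinarith
  have hlow : ∀ n k, k ≤ n + 1 → a n k ≤ a (n+1) (k+1) := by
    intro n k hk
    rcases Nat.lt_or_ge k (n+1) with h | h
    · have hr := harec (n+1) (by omega) (k+1) (by omega) (by omega)
      rw [show (n+1) - 1 = n by omega, show (k+1) - 1 = k by omega] at hr
      have hm : a n k ≤ a n (k+1) := hmonok n k (by omega)
      obtain ⟨hpa, hpb⟩ := hp (n+1) (k+1)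
      nlinarith
    · have hk' : k = n+1 := by omega
      subst hk'
      exact ha_mono (Nat.le_succ n)
  have hupIter : ∀ m j k, k ≤ m + 1 → a (m + j) k ≤ a m k := by
    intro m j
    induction j with
    | zero => intro k _; exact le_rfl
    | succ j ih =>
      intro k hk
      exact le_trans (hup (m+j) k (by omega)) (ih k hk)
  have hlowIter : ∀ m j k, k ≤ m + 1 → a m k ≤ a (m + j) (k + j) := by
    intro m j
    induction j with
    | zero => intro k _; exact le_rfl
    | succ j ih =>
      intro k hk
      exact le_trans (ih k hk) (hlow (m+j) (k+j) (by omega))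
  -- ## Sandwich: old interval contains later break points
  have hsand : ∀ m j k, j ≤ k → k ≤ m + 1 →
      a m 0 ≤ a (m + j) k ∧ a (m + j) k ≤ a m (m+1) := by
    intro m j k hjk hk
    constructor
    · obtain ⟨i, rfl⟩ := Nat.exists_eq_add_of_le hjk
      have h1 : a m 0 ≤ a m i := hmonok' m 0 i (Nat.zero_le i) (by omega)
      have h2 : a m i ≤ a (m+j) (i+j) := hlowIter m j i (by omega)
      rw [show i + j = j + i by omega] at h2
      exact le_trans h1 h2
    · exact le_trans (hupIter m j k hk) (hmonok' m k (m+1) hk le_rfl)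
  -- ## Left endpoint step identity
  have hstep0 : ∀ n : ℕ, a n 0 - a (n+1) 0 = (1 - qseq (n+1)) * (l (n+1) - l n) := by
    intro n
    rcases lt_or_eq_of_le (hlstep n) with hlt | heq
    · have hq1 := hq_def (n+1) (by omega) (by rw [show (n+1) - 1 = n by omega]; exact hlt)
      rw [show (n+1) - 1 = n by omega] at hq1
      have hne : l (n+1) - l n ≠ 0 := by linarith
      have key : qseq (n+1) * (l (n+1) - l n) = a (n+1) (n+1+1) - a n (n+1) := by
        rw [hq1]; field_simp
      have e1 := hl (n+1); have e2 := hl n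
      have expand : (1 - qseq (n+1)) * (l (n+1) - l n)
          = (l (n+1) - l n) - qseq (n+1) * (l (n+1) - l n) := by ring
      rw [expand, key]
      linarith
    · have e1 := hl (n+1); have e2 := hl n
      have h1 : a (n+1) 0 ≤ a n 0 := ha_anti (Nat.le_succ n)
      have h2 : a n (n+1) ≤ a (n+1) (n+1+1) := ha_mono (Nat.le_succ n)
      rw [← heq, sub_self, mul_zero]
      linarith
  -- ## Telescoping
  have htel : ∀ m d : ℕ, a m 0 - a (m+d) 0
      = ∑ i ∈ Finset.range d, (1 - qseq (m+i+1)) * (l (m+i+1) - l (m+i)) := by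
    intro m d
    induction d with
    | zero => simp
    | succ d ih =>
      rw [Finset.sum_range_succ, ← ih]
      have h := hstep0 (m+d)
      rw [show m + (d+1) = m + d + 1 from rfl]
      linarith
  have htell : ∀ m d : ℕ, l (m+d) - l m = ∑ i ∈ Finset.range d, (l (m+i+1) - l (m+i)) := by
    intro m d
    induction d with
    | zero => simp
    | succ d ih =>
      rw [Finset.sum_range_succ, ← ih, show m + (d+1) = m + d + 1 from rfl]
      ring
  -- ## Center estimate
  have hcenter : ∀ η : ℝ, 0 < η → ∃ N : ℕ, ∀ m n : ℕ, N ≤ m → m ≤ n →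
      |a m 0 - a n 0 - (1 - q) * (l n - l m)| ≤ η * l n := by
    intro η hη
    obtain ⟨N, hN⟩ := (Metric.tendsto_atTop.mp hq_lim) η hη
    refine ⟨N, fun m n hNm hmn => ?_⟩
    obtain ⟨d, rfl⟩ := Nat.exists_eq_add_of_le hmn
    have key : |a m 0 - a (m+d) 0 - (1 - q) * (l (m+d) - l m)|
        ≤ η * (l (m+d) - l m) := by
      calc |a m 0 - a (m+d) 0 - (1 - q) * (l (m+d) - l m)|
          = |∑ i ∈ Finset.range d, ((1 - qseq (m+i+1)) - (1 - q)) * (l (m+i+1) - l (m+i))| := by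
            rw [htel m d, htell m d, Finset.mul_sum, ← Finset.sum_sub_distrib]
            exact congrArg abs (Finset.sum_congr rfl (fun i _ => by ring))
        _ ≤ ∑ i ∈ Finset.range d, |((1 - qseq (m+i+1)) - (1 - q)) * (l (m+i+1) - l (m+i))| :=
            Finset.abs_sum_le_sum_abs _ _
        _ ≤ ∑ i ∈ Finset.range d, η * (l (m+i+1) - l (m+i)) := by
            refine Finset.sum_le_sum fun i _ => ?_
            rw [abs_mul, abs_of_nonneg (by linarith [hlstep (m+i)] : (0:ℝ) ≤ l (m+i+1) - l (m+i))]
            refine mul_le_mul_of_nonneg_right ?_ (by linarith [hlstep (m+i)])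
            have h := hN (m+i+1) (by omega)
            rw [Real.dist_eq] at h
            have e : (1 - qseq (m+i+1)) - (1 - q) = -(qseq (m+i+1) - q) := by ring
            rw [e, abs_neg]
            exact le_of_lt h
        _ = η * (l (m+d) - l m) := by rw [← Finset.mul_sum, ← htell m d]
    have h2 : η * (l (m+d) - l m) ≤ η * l (m+d) := by
      have := hlpos m
      nlinarith
    exact le_trans key h2
  -- ## q ∈ [0,1]
  have hq0 : 0 ≤ q := ge_of_tendsto' hq_lim fun n => (hq_mem n).1
  have hq1' : q ≤ 1 := le_of_tendsto' hq_lim fun n => (hq_mem n).2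
  -- ## α concentration estimate
  have hαb : ∀ η : ℝ, 0 < η → ∃ N : ℕ, ∀ m j k : ℕ, N ≤ m → j ≤ k → k ≤ m + 1 →
      |α (m+j) k - (1 - q)| ≤ η + 2 * (l m / l (m+j)) := by
    intro η hη
    obtain ⟨N, hN⟩ := hcenter η hη
    refine ⟨N, fun m j k hNm hjk hk => ?_⟩
    have hln := hlpos (m+j)
    have hlm := hlpos m
    have hsd := hsand m j k hjk hk
    have hcen := hN m (m+j) hNm (by omega)
    have hlmn : l m ≤ l (m+j) := hlmono (by omega)
    have e2 := hl m
    obtain ⟨hc1, hc2⟩ := abs_le.mp hcen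
    have hq1m : (1 - q) * l m ≤ l m := by nlinarith
    have hq0m : 0 ≤ (1 - q) * l m := by nlinarith
    have hgoal : |(a (m+j) k - a (m+j) 0) - (1-q) * l (m+j)| ≤ η * l (m+j) + 2 * l m := by
      rw [abs_le]
      have hs1 := hsd.1
      have hs2 := hsd.2
      constructor
      · nlinarith
      · nlinarith
    rw [hα (m+j) k]
    have heq : (a (m+j) k - a (m+j) 0) / l (m+j) - (1-q)
        = ((a (m+j) k - a (m+j) 0) - (1-q) * l (m+j)) / l (m+j) := by
      field_simp
    rw [heq, abs_div, abs_of_pos hln, div_le_iff₀ hln]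
    calc |(a (m+j) k - a (m+j) 0) - (1-q) * l (m+j)| ≤ η * l (m+j) + 2 * l m := hgoal
      _ = (η + 2 * (l m / l (m+j))) * l (m+j) := by field_simp
  -- ## Rewrite the integrals
  have hRHS : ∫ x, f x ∂(Measure.dirac (1 - q)) = f (1 - q) := integral_dirac _ _
  have hInt : (fun n : ℕ => ∫ x, f x ∂(empiricalMeasure α n))
      =ᶠ[atTop] (fun n : ℕ => (n:ℝ)⁻¹ * ∑ k ∈ Finset.Icc 1 n, f (α n k)) := by
    filter_upwards [eventually_ge_atTop 1] with n hn
    show ∫ x, f x ∂(empiricalMeasure α n) = (n:ℝ)⁻¹ * ∑ k ∈ Finset.Icc 1 n, f (α n k)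
    unfold empiricalMeasure
    rw [integral_smul_measure, integral_finset_sum_measure (fun k _ => f.integrable _)]
    simp [integral_dirac, smul_eq_mul]
  rw [hRHS]
  refine Tendsto.congr' hInt.symm ?_
  -- ## Main limit
  rw [Metric.tendsto_atTop]
  intro ε hε
  set C := ‖f‖ with hCdef
  have hC0 : (0:ℝ) ≤ C := norm_nonneg f
  have hfb : ∀ x : ℝ, |f x - f (1-q)| ≤ 2 * C := by
    intro x
    have h1 := norm_sub_le (f x) (f (1-q))
    have h2 := f.norm_coe_le_norm x
    have h3 := f.norm_coe_le_norm (1-q)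
    rw [Real.norm_eq_abs] at h1
    linarith
  obtain ⟨δ0, hδ0, hfδ⟩ := Metric.continuousAt_iff.mp (f.continuous.continuousAt (x := 1-q))
    (ε/2) (by linarith)
  obtain ⟨Nq, hNq⟩ := hαb (δ0/4) (by linarith)
  set δ : ℝ := min (1/2) (ε / (16*(C+1))) with hδdef
  have hδpos : 0 < δ := lt_min (by norm_num) (by positivity)
  have hδhalf : δ ≤ 1/2 := min_le_left _ _
  have hδε : δ ≤ ε / (16*(C+1)) := min_le_right _ _
  have hδε' : δ * (16*(C+1)) ≤ ε := (le_div_iff₀ (by positivity)).mp hδε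
  have hLtend : Tendsto (fun n : ℕ => L ((n:ℝ) * (1 - δ)) / L n) atTop (nhds 0) :=
    (hL_fast_lt (1-δ) (by linarith) (by linarith)).comp tendsto_natCast_atTop_atTop
  obtain ⟨N2, hN2⟩ := (Metric.tendsto_atTop.mp hLtend) (δ0/8) (by linarith)
  obtain ⟨N4, hN4⟩ := exists_nat_ge (32*(C+1)/ε)
  refine ⟨max (max 1 N2) (max (2*Nq + 4) N4), fun n hn => ?_⟩
  have hn1 : 1 ≤ n := le_trans (le_trans (le_max_left 1 N2) (le_max_left _ _)) hn
  have hnN2 : N2 ≤ n := le_trans (le_trans (le_max_right 1 N2) (le_max_left _ _)) hn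
  have hnNq : 2*Nq + 4 ≤ n := le_trans (le_trans (le_max_left _ N4) (le_max_right _ _)) hn
  have hnN4 : N4 ≤ n := le_trans (le_trans (le_max_right _ N4) (le_max_right _ _)) hn
  have hn1R : (1:ℝ) ≤ (n:ℝ) := by exact_mod_cast hn1
  have hnpos : (0:ℝ) < (n:ℝ) := by linarith
  have hbig : 32*(C+1) ≤ ε * n := by
    have : (32*(C+1)/ε) ≤ (n:ℝ) := le_trans hN4 (by exact_mod_cast hnN4)
    rw [div_le_iff₀ hε] at this
    linarith
  set j : ℕ := ⌈δ * (n:ℝ)⌉₊ with hjdef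
  have hδn0 : 0 < δ * (n:ℝ) := by positivity
  have hj1 : 1 ≤ j := Nat.one_le_iff_ne_zero.mpr (by
    intro h
    have := Nat.ceil_pos.mpr hδn0
    omega)
  have hjR : (j:ℝ) ≤ δ * n + 1 := (Nat.ceil_lt_add_one hδn0.le).le
  have hjlow : δ * n ≤ (j:ℝ) := Nat.le_ceil _
  have hjn : j ≤ n := Nat.ceil_le.mpr
    (by nlinarith [mul_le_mul_of_nonneg_right hδhalf hnpos.le])
  have h2j : 2*j ≤ n + 2 := by
    have h : ((2*j:ℕ):ℝ) ≤ ((n+2:ℕ):ℝ) := by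
      push_cast
      nlinarith [mul_le_mul_of_nonneg_right hδhalf hnpos.le]
    exact Nat.cast_le.mp h
  set m : ℕ := n - j with hmdef
  have hmj : m + j = n := by omega
  have hnjNq : Nq ≤ m := by omega
  -- ratio bound
  have hratio : l m / l n < δ0/8 := by
    have hmcast : ((m:ℕ):ℝ) ≤ (n:ℝ) * (1 - δ) := by
      have : ((m:ℕ):ℝ) = (n:ℝ) - (j:ℝ) := by
        rw [hmdef, Nat.cast_sub hjn]
      rw [this]; nlinarith
    have hLm : L m ≤ L ((n:ℝ)*(1-δ)) :=
      hL_mono (by simp : ((m:ℕ):ℝ) ∈ Ici (0:ℝ)) (by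
        have : (0:ℝ) ≤ (n:ℝ)*(1-δ) := by nlinarith
        simpa using this) hmcast
    have hLn : L n = l n := hL_interp n
    have hdiv : l m / l n ≤ L ((n:ℝ)*(1-δ)) / L n := by
      rw [← hL_interp m, ← hL_interp n]
      gcongr
      exact hL_nonneg _ (Nat.cast_nonneg n)
    have h8 := hN2 n hnN2
    rw [Real.dist_eq, sub_zero, abs_of_nonneg (div_nonneg (hL_nonneg _ (by nlinarith))
      (by rw [hLn]; exact (hlpos n).le))] at h8
    exact lt_of_le_of_lt hdiv h8
  -- good-k bound
  have hgood : ∀ k : ℕ, j ≤ k → k ≤ n + 1 - j → |f (α n k) - f (1-q)| ≤ ε/2 := by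
    intro k hjk hkle
    have hk' : k ≤ m + 1 := by omega
    have hb := hNq m j k hnjNq hjk hk'
    rw [hmj] at hb
    have hd : |α n k - (1-q)| < δ0 := by
      have : (2:ℝ) * (l m / l n) < δ0/4 := by linarith
      linarith
    have := hfδ (by rw [Real.dist_eq]; exact hd)
    rw [Real.dist_eq] at this
    linarith
  -- sum estimate
  have hcard : (Finset.Icc 1 n).card = n := by
    rw [Nat.card_Icc]; omega
  have hsum_le : ∑ k ∈ Finset.Icc 1 n, |f (α n k) - f (1-q)|
      ≤ (ε/2) * n + (2*C) * (2*(j:ℝ)) := by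
    classical
    rw [← Finset.sum_filter_add_sum_filter_not (Finset.Icc 1 n)
      (fun k => j ≤ k ∧ k ≤ n + 1 - j)]
    have h1 : ∑ k ∈ (Finset.Icc 1 n).filter (fun k => j ≤ k ∧ k ≤ n + 1 - j),
        |f (α n k) - f (1-q)| ≤ (ε/2) * n := by
      calc ∑ k ∈ (Finset.Icc 1 n).filter (fun k => j ≤ k ∧ k ≤ n + 1 - j),
            |f (α n k) - f (1-q)|
          ≤ ∑ _k ∈ (Finset.Icc 1 n).filter (fun k => j ≤ k ∧ k ≤ n + 1 - j), (ε/2) :=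
            Finset.sum_le_sum (fun k hk => by
              rw [Finset.mem_filter] at hk
              exact hgood k hk.2.1 hk.2.2)
        _ = ((Finset.Icc 1 n).filter (fun k => j ≤ k ∧ k ≤ n + 1 - j)).card * (ε/2) := by
            rw [Finset.sum_const, nsmul_eq_mul]
        _ ≤ n * (ε/2) := by
            have hle : ((Finset.Icc 1 n).filter (fun k => j ≤ k ∧ k ≤ n + 1 - j)).card ≤ n := by
              calc _ ≤ (Finset.Icc 1 n).card := Finset.card_filter_le _ _
                _ = n := hcard
            have : (((Finset.Icc 1 n).filter (fun k => j ≤ k ∧ k ≤ n + 1 - j)).card : ℝ)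
                ≤ (n:ℝ) := by exact_mod_cast hle
            nlinarith
        _ = (ε/2) * n := by ring
    have h2 : ∑ k ∈ (Finset.Icc 1 n).filter (fun k => ¬(j ≤ k ∧ k ≤ n + 1 - j)),
        |f (α n k) - f (1-q)| ≤ (2*C) * (2*(j:ℝ)) := by
      have hsubset : (Finset.Icc 1 n).filter (fun k => ¬(j ≤ k ∧ k ≤ n + 1 - j))
          ⊆ Finset.Ico 1 j ∪ Finset.Ioc (n+1-j) n := by
        intro k hk
        simp only [Finset.mem_filter, Finset.mem_Icc, Finset.mem_union, Finset.mem_Ico,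
          Finset.mem_Ioc, not_and, not_le] at hk ⊢
        omega
      have hcardb : ((Finset.Icc 1 n).filter (fun k => ¬(j ≤ k ∧ k ≤ n + 1 - j))).card
          ≤ 2*j := by
        calc _ ≤ (Finset.Ico 1 j ∪ Finset.Ioc (n+1-j) n).card := Finset.card_le_card hsubset
          _ ≤ (Finset.Ico 1 j).card + (Finset.Ioc (n+1-j) n).card := Finset.card_union_le _ _
          _ = (j - 1) + (n - (n+1-j)) := by rw [Nat.card_Ico, Nat.card_Ioc]
          _ ≤ 2*j := by omega
      calc ∑ k ∈ (Finset.Icc 1 n).filter (fun k => ¬(j ≤ k ∧ k ≤ n + 1 - j)),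
            |f (α n k) - f (1-q)|
          ≤ ∑ _k ∈ (Finset.Icc 1 n).filter (fun k => ¬(j ≤ k ∧ k ≤ n + 1 - j)), (2*C) :=
            Finset.sum_le_sum (fun k _ => hfb (α n k))
        _ = (((Finset.Icc 1 n).filter (fun k => ¬(j ≤ k ∧ k ≤ n + 1 - j))).card : ℝ) * (2*C) := by
            rw [Finset.sum_const, nsmul_eq_mul]
        _ ≤ (2*(j:ℝ)) * (2*C) := by
            have : (((Finset.Icc 1 n).filter (fun k => ¬(j ≤ k ∧ k ≤ n + 1 - j))).card : ℝ)
                ≤ 2*(j:ℝ) := by exact_mod_cast hcardb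
            nlinarith
        _ = (2*C) * (2*(j:ℝ)) := by ring
    linarith
  -- final bound
  have hsplit : (n:ℝ)⁻¹ * ∑ k ∈ Finset.Icc 1 n, f (α n k) - f (1-q)
      = (n:ℝ)⁻¹ * ∑ k ∈ Finset.Icc 1 n, (f (α n k) - f (1-q)) := by
    rw [Finset.sum_sub_distrib, Finset.sum_const, hcard, nsmul_eq_mul, mul_sub]
    rw [inv_mul_cancel_left₀ (ne_of_gt hnpos)]
  rw [Real.dist_eq, hsplit]
  have habs : |(n:ℝ)⁻¹ * ∑ k ∈ Finset.Icc 1 n, (f (α n k) - f (1-q))|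
      ≤ (n:ℝ)⁻¹ * ∑ k ∈ Finset.Icc 1 n, |f (α n k) - f (1-q)| := by
    rw [abs_mul, abs_inv, Nat.abs_cast]
    exact mul_le_mul_of_nonneg_left (Finset.abs_sum_le_sum_abs _ _)
      (inv_nonneg.mpr (Nat.cast_nonneg n))
  have hfin : (n:ℝ)⁻¹ * ∑ k ∈ Finset.Icc 1 n, |f (α n k) - f (1-q)| ≤ 7*ε/8 := by
    have h1 : (n:ℝ)⁻¹ * ∑ k ∈ Finset.Icc 1 n, |f (α n k) - f (1-q)|
        ≤ (n:ℝ)⁻¹ * ((ε/2) * n + (2*C) * (2*(j:ℝ))) :=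
      mul_le_mul_of_nonneg_left hsum_le (inv_nonneg.mpr (Nat.cast_nonneg n))
    refine le_trans h1 ?_
    rw [inv_mul_eq_div, div_le_iff₀ hnpos]
    nlinarith [mul_le_mul_of_nonneg_right hδε' hnpos.le,
      mul_le_mul_of_nonneg_left hjR (by linarith : (0:ℝ) ≤ 4*C),
      mul_nonneg hC0 hδpos.le, mul_nonneg (mul_nonneg hC0 hδpos.le) hnpos.le]
  calc |(n:ℝ)⁻¹ * ∑ k ∈ Finset.Icc 1 n, (f (α n k) - f (1-q))|
      ≤ 7*ε/8 := le_trans habs hfin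
    _ < ε := by linarith
end
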